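/- arXiv:1309.0259 — 8 statements merged into one kernel-verified Lean document; each statement's English description precedes it below -/
import Mathlib

section
/- For every n ≥ 3, the cycle C_n on n vertices has minimum L(2,1)-labeling span λ(C_n) = 4. -/
open SimpleGraph
open Fin.CommRing

/-- An `L(2,1)`-labeling of `G`: adjacent vertices get labels differing by at least 2,
vertices at distance 2 get labels differing by at least 1. -/
def IsL21 {V : Type*} (G : SimpleGraph V) (f : V → ℤ) : Prop :=
  (∀ x y, G.Adj x y → 2 ≤ |f x - f y|) ∧ (∀ x y, G.dist x y = 2 → 1 ≤ |f x - f y|)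

/-- The span of a labeling: the largest label minus the smallest label. -/
def labelSpan {V : Type*} [Fintype V] (f : V → ℤ) : ℕ :=
  Finset.univ.sup fun p : V × V => (f p.1 - f p.2).toNat

/-- `λ(G)`: the minimum span over all `L(2,1)`-labelings of `G`. -/
noncomputable def lambda21 {V : Type*} [Fintype V] (G : SimpleGraph V) : ℕ :=
  sInf {s | ∃ f : V → ℤ, IsL21 G f ∧ labelSpan f = s}

/-! ### Auxiliary material -/

/-- The label pattern used for the cycle `C_n`. -/
def pat (n m : ℕ) : ℤ :=
  if n % 3 = 1 then
    if m + 4 = n then 0 else if m + 3 = n then 3 else if m + 2 = n then 1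
    else if m + 1 = n then 4 else 2 * (m % 3)
  else if n % 3 = 2 then
    if m + 5 = n then 1 else if m + 4 = n then 3 else if m + 3 = n then 0
    else if m + 2 = n then 2 else if m + 1 = n then 4 else 2 * (m % 3)
  else 2 * (m % 3)

theorem pat_bounds (n m : ℕ) : 0 ≤ pat n m ∧ pat n m ≤ 4 := by
  unfold pat; split_ifs <;> omega

theorem pat_A1 (n m : ℕ) (hm : m + 1 < n) :
    2 ≤ pat n (m+1) - pat n m ∨ pat n (m+1) - pat n m ≤ -2 := by
  unfold pat; split_ifs <;> omega

theorem pat_A2 (n m : ℕ) (hn : 3 ≤ n) (hm : m + 1 = n) :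
    2 ≤ pat n 0 - pat n m ∨ pat n 0 - pat n m ≤ -2 := by
  unfold pat; split_ifs <;> omega

theorem pat_B1 (n m : ℕ) (hn : 3 ≤ n) (hm : m + 2 < n) :
    1 ≤ pat n (m+2) - pat n m ∨ pat n (m+2) - pat n m ≤ -1 := by
  unfold pat; split_ifs <;> omega

theorem pat_B2 (n m : ℕ) (hn : 3 ≤ n) (hm : m + 2 = n) :
    1 ≤ pat n 0 - pat n m ∨ pat n 0 - pat n m ≤ -1 := by
  unfold pat; split_ifs <;> omega

theorem pat_B3 (n m : ℕ) (hn : 3 ≤ n) (hm : m + 1 = n) :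
    1 ≤ pat n 1 - pat n m ∨ pat n 1 - pat n m ≤ -1 := by
  unfold pat; split_ifs <;> omega

theorem pat_last (n : ℕ) (hn : 3 ≤ n) : pat n (n - 1) = 4 := by
  unfold pat; split_ifs <;> omega

theorem pat_exists_zero (n : ℕ) (hn : 3 ≤ n) : ∃ m, m < n ∧ pat n m = 0 := by
  refine ⟨if n % 3 = 1 then n - 4 else if n % 3 = 2 then n - 3 else 0, ?_, ?_⟩
  · split_ifs <;> omega
  · unfold pat; split_ifs <;> omega

/-- Adjacency in the cycle graph, for `3 ≤ n`. -/
theorem cycle_adj_iff (n : ℕ) [NeZero n] (hn : 3 ≤ n) (x y : Fin n) :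
    (cycleGraph n).Adj x y ↔ y = x + 1 ∨ x = y + 1 := by
  haveI : NeZero n := ⟨by omega⟩
  have h1 : (1 : Fin n).val = 1 := by
    rw [Fin.val_one']; exact Nat.mod_eq_of_lt (by omega)
  rw [SimpleGraph.cycleGraph_adj']
  constructor
  · rintro (h | h)
    · right
      have hxy : x - y = 1 := Fin.val_inj.mp (h.trans h1.symm)
      linear_combination hxy
    · left
      have hxy : y - x = 1 := Fin.val_inj.mp (h.trans h1.symm)
      linear_combination hxy
  · rintro (h | h)
    · right
      rw [h, show x + 1 - x = (1 : Fin n) by ring, h1]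
    · left
      rw [h, show y + 1 - y = (1 : Fin n) by ring, h1]

/-- In `C_n` with `n ≥ 4`, the two neighbors of a vertex are at distance 2. -/
theorem cycle_dist_two (n : ℕ) [NeZero n] (hn : 4 ≤ n) (y : Fin n) :
    (cycleGraph n).dist (y - 1) (y + 1) = 2 := by
  haveI : NeZero n := ⟨by omega⟩
  have hn3 : 3 ≤ n := by omega
  have h1 : (1 : Fin n).val = 1 := by
    rw [Fin.val_one']; exact Nat.mod_eq_of_lt (by omega)
  have h2 : (2 : Fin n).val = 2 := by
    rw [show (2 : Fin n) = 1 + 1 by norm_num, Fin.val_add, h1]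
    exact Nat.mod_eq_of_lt (by omega)
  have h3 : (3 : Fin n).val = 3 := by
    rw [show (3 : Fin n) = 1 + 1 + 1 by norm_num, Fin.val_add,
      show ((1 : Fin n) + 1) = (2 : Fin n) by norm_num, h2, h1]
    exact Nat.mod_eq_of_lt (by omega)
  have hadj1 : (cycleGraph n).Adj (y - 1) y := by
    rw [cycle_adj_iff n hn3]; left; ring
  have hadj2 : (cycleGraph n).Adj y (y + 1) := by
    rw [cycle_adj_iff n hn3]; exact Or.inl rfl
  have hle : (cycleGraph n).dist (y - 1) (y + 1) ≤ 2 := by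
    have := SimpleGraph.dist_le (Walk.cons hadj1 (Walk.cons hadj2 Walk.nil))
    simpa using this
  have hne : y - 1 ≠ y + 1 := by
    intro h
    have h20 : (2 : Fin n) = 0 := by linear_combination -h
    have := congrArg Fin.val h20
    rw [h2] at this
    simp at this
  have hnadj : ¬ (cycleGraph n).Adj (y - 1) (y + 1) := by
    rw [cycle_adj_iff n hn3]
    rintro (h | h)
    · have h10 : (1 : Fin n) = 0 := by linear_combination h
      have := congrArg Fin.val h10
      rw [h1] at this
      simp at this
    · have h30 : (3 : Fin n) = 0 := by linear_combination -h
      have := congrArg Fin.val h30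
      rw [h3] at this
      simp at this
  have h0 : (cycleGraph n).dist (y - 1) (y + 1) ≠ 0 := by
    intro h
    rcases SimpleGraph.dist_eq_zero_iff_eq_or_not_reachable.mp h with h' | h'
    · exact hne h'
    · exact h' ⟨Walk.cons hadj1 (Walk.cons hadj2 Walk.nil)⟩
  have hone : (cycleGraph n).dist (y - 1) (y + 1) ≠ 1 := by
    intro h
    exact hnadj (SimpleGraph.dist_eq_one_iff_adj.mp h)
  obtain ⟨d, hd⟩ : ∃ d, (cycleGraph n).dist (y - 1) (y + 1) = d := ⟨_, rfl⟩
  rw [hd] at hle h0 hone ⊢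
  omega

/-- Key step of the lower bound for `n ≥ 4`. -/
theorem aux_lower (n : ℕ) [NeZero n] (hn : 4 ≤ n) (f : Fin n → ℤ)
    (hf : IsL21 (cycleGraph n) f) (v₀ : Fin n)
    (hmin : ∀ a : Fin n, f v₀ ≤ f a) (hspan : ∀ a : Fin n, f a ≤ f v₀ + 3)
    (u' u'' : Fin n) (h2 : (cycleGraph n).Adj u' u'')
    (hfu : f u' = f v₀ + 2) (hd : (cycleGraph n).dist v₀ u'' = 2) : False := by
  have hA := hf.1 u' u'' h2
  have hB := hf.2 v₀ u'' hd
  have hm := hmin u''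
  have hs := hspan u''
  rcases le_abs.mp hA with h | h <;> rcases le_abs.mp hB with h' | h' <;> linarith

theorem lambda21_cycleGraph (n : ℕ) (hn : 3 ≤ n) :
    lambda21 (SimpleGraph.cycleGraph n) = 4 := by
  haveI : NeZero n := ⟨by omega⟩
  have h1 : (1 : Fin n).val = 1 := by
    rw [Fin.val_one']; exact Nat.mod_eq_of_lt (by omega)
  -- the labeling
  set F : Fin n → ℤ := fun i => pat n i.val with hF
  have hvadd : ∀ x : Fin n, (x + 1).val = (x.val + 1) % n := by
    intro x; rw [Fin.val_add, h1]
  -- adjacent labels differ by ≥ 2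
  have hA : ∀ x : Fin n, 2 ≤ |F (x + 1) - F x| := by
    intro x
    rw [le_abs]
    by_cases hlt : x.val + 1 < n
    · have hv : (x + 1).val = x.val + 1 := by
        rw [hvadd]; exact Nat.mod_eq_of_lt hlt
      have := pat_A1 n x.val hlt
      simp only [hF, hv]
      rcases this with h | h
      · exact Or.inl h
      · exact Or.inr (by linarith)
    · have heq : x.val + 1 = n := by have := x.isLt; omega
      have hv : (x + 1).val = 0 := by rw [hvadd, heq, Nat.mod_self]
      have := pat_A2 n x.val hn heq
      simp only [hF, hv]
      rcases this with h | h
      · exact Or.inl h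
      · exact Or.inr (by linarith)
  -- labels at distance-2 positions differ by ≥ 1
  have hB : ∀ x : Fin n, 1 ≤ |F (x + 1 + 1) - F x| := by
    intro x
    rw [le_abs]
    have hv2 : (x + 1 + 1).val = (x.val + 2) % n := by
      rw [Fin.val_add, hvadd, h1]
      rcases Nat.lt_or_ge (x.val + 1) n with hlt | hge
      · rw [Nat.mod_eq_of_lt hlt]
      · have : x.val + 1 = n := by have := x.isLt; omega
        rw [this, Nat.mod_self, Nat.zero_add, show x.val + 2 = n + 1 by omega,
          Nat.add_mod_left]
    by_cases hlt : x.val + 2 < n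
    · have hv : (x + 1 + 1).val = x.val + 2 := by rw [hv2]; exact Nat.mod_eq_of_lt hlt
      have := pat_B1 n x.val hn hlt
      simp only [hF, hv]
      rcases this with h | h
      · exact Or.inl h
      · exact Or.inr (by linarith)
    · by_cases heq : x.val + 2 = n
      · have hv : (x + 1 + 1).val = 0 := by rw [hv2, heq, Nat.mod_self]
        have := pat_B2 n x.val hn heq
        simp only [hF, hv]
        rcases this with h | h
        · exact Or.inl h
        · exact Or.inr (by linarith)
      · have heq1 : x.val + 1 = n := by have := x.isLt; omega
        have hv : (x + 1 + 1).val = 1 := by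
          rw [hv2, show x.val + 2 = n + 1 by omega, Nat.add_mod_left]
          exact Nat.mod_eq_of_lt (by omega)
        have := pat_B3 n x.val hn heq1
        simp only [hF, hv]
        rcases this with h | h
        · exact Or.inl h
        · exact Or.inr (by linarith)
  -- F is an L(2,1)-labeling
  have hIs : IsL21 (cycleGraph n) F := by
    constructor
    · intro x y hadj
      rcases (cycle_adj_iff n hn x y).mp hadj with h | h
      · rw [h, abs_sub_comm]; exact hA x
      · rw [h]; exact hA y
    · intro x y hdist
      have hne : x ≠ y := by
        have := SimpleGraph.dist_ne_zero_iff_ne_and_reachable.mp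
          (by rw [hdist]; norm_num)
        exact this.1
      obtain ⟨p, hp⟩ := SimpleGraph.exists_walk_of_dist_ne_zero
        (G := cycleGraph n) (u := x) (v := y) (by rw [hdist]; norm_num)
      rw [hdist] at hp
      cases p with
      | nil => simp at hp
      | cons hadj1 q =>
        cases q with
        | nil => simp at hp
        | cons hadj2 r =>
          cases r with
          | cons hadj3 r' => simp [SimpleGraph.Walk.length_cons] at hp
          | nil =>
            rcases (cycle_adj_iff n hn _ _).mp hadj1 with hb | hb <;>
              rcases (cycle_adj_iff n hn _ _).mp hadj2 with hc | hc
            · rw [hc, hb, abs_sub_comm]; exact hB x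
            · exact absurd (add_right_cancel (hb.symm.trans hc)) hne
            · exact absurd (hb.trans hc.symm) hne
            · rw [hb, hc]; exact hB y
  -- the span of F is exactly 4
  have hspan4 : labelSpan F = 4 := by
    obtain ⟨m0, hm0lt, hm0⟩ := pat_exists_zero n hn
    apply le_antisymm
    · apply Finset.sup_le
      intro p _
      have b1 := pat_bounds n p.1.val
      have b2 := pat_bounds n p.2.val
      rw [Int.toNat_le]
      have : F p.1 = pat n p.1.val := rfl
      have : F p.2 = pat n p.2.val := rfl
      simp only [hF]
      push_cast
      linarith [b1.2, b2.1]
    · have hval : (F ⟨n - 1, by omega⟩ - F ⟨m0, hm0lt⟩).toNat = 4 := by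
        simp only [hF]
        rw [pat_last n hn, hm0]
        rfl
      calc (4 : ℕ) = (F ⟨n - 1, by omega⟩ - F ⟨m0, hm0lt⟩).toNat := hval.symm
        _ ≤ labelSpan F := Finset.le_sup (f := fun p : Fin n × Fin n =>
            (F p.1 - F p.2).toNat) (Finset.mem_univ (⟨n - 1, by omega⟩, ⟨m0, hm0lt⟩))
  have hmem : (4 : ℕ) ∈ {s | ∃ f : Fin n → ℤ, IsL21 (cycleGraph n) f ∧ labelSpan f = s} :=
    ⟨F, hIs, hspan4⟩
  -- lower bound: every L(2,1)-labeling has span ≥ 4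
  have hlb : ∀ s ∈ {s | ∃ f : Fin n → ℤ, IsL21 (cycleGraph n) f ∧ labelSpan f = s},
      4 ≤ s := by
    rintro s ⟨f, hf, rfl⟩
    by_contra hcon
    push_neg at hcon
    have hsp : ∀ a b : Fin n, f a - f b ≤ 3 := by
      intro a b
      have hle : (f a - f b).toNat ≤ labelSpan f :=
        Finset.le_sup (f := fun p : Fin n × Fin n => (f p.1 - f p.2).toNat)
          (Finset.mem_univ (a, b))
      have : (f a - f b).toNat ≤ 3 := by omega
      omega
    obtain ⟨v₀, -, hmin'⟩ := Finset.exists_min_image (Finset.univ : Finset (Fin n)) f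
      ⟨⟨0, by omega⟩, Finset.mem_univ _⟩
    have hmin : ∀ a : Fin n, f v₀ ≤ f a := fun a => hmin' a (Finset.mem_univ a)
    by_cases h4 : 4 ≤ n
    · -- n ≥ 4
      have hspan : ∀ a : Fin n, f a ≤ f v₀ + 3 := by
        intro a; have := hsp a v₀; linarith
      have hadju : (cycleGraph n).Adj v₀ (v₀ - 1) := by
        rw [cycle_adj_iff n hn]; right; ring
      have hadjw : (cycleGraph n).Adj v₀ (v₀ + 1) := by
        rw [cycle_adj_iff n hn]; exact Or.inl rfl
      have hu2 : f v₀ + 2 ≤ f (v₀ - 1) := by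
        have := hf.1 v₀ (v₀ - 1) hadju
        have hm := hmin (v₀ - 1)
        rcases le_abs.mp this with h | h <;> linarith
      have hw2 : f v₀ + 2 ≤ f (v₀ + 1) := by
        have := hf.1 v₀ (v₀ + 1) hadjw
        have hm := hmin (v₀ + 1)
        rcases le_abs.mp this with h | h <;> linarith
      have hduw : (cycleGraph n).dist (v₀ - 1) (v₀ + 1) = 2 := cycle_dist_two n h4 v₀
      have hne : 1 ≤ |f (v₀ - 1) - f (v₀ + 1)| := hf.2 _ _ hduw
      have hcases : f (v₀ - 1) = f v₀ + 2 ∨ f (v₀ + 1) = f v₀ + 2 := by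
        have hsu := hspan (v₀ - 1)
        have hsw := hspan (v₀ + 1)
        rcases le_abs.mp hne with h | h
        · right; linarith
        · left; linarith
      rcases hcases with hcase | hcase
      · -- u' = v₀ - 1, u'' = v₀ - 1 - 1
        have hadj' : (cycleGraph n).Adj (v₀ - 1) (v₀ - 1 - 1) := by
          rw [cycle_adj_iff n hn]; right; ring
        have hd' : (cycleGraph n).dist v₀ (v₀ - 1 - 1) = 2 := by
          have h := cycle_dist_two n h4 (v₀ - 1)
          rw [show v₀ - 1 + 1 = v₀ by ring] at h
          rw [SimpleGraph.dist_comm]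
          exact h
        exact aux_lower n h4 f hf v₀ hmin hspan (v₀ - 1) (v₀ - 1 - 1) hadj' hcase hd'
      · -- u' = v₀ + 1, u'' = v₀ + 1 + 1
        have hadj' : (cycleGraph n).Adj (v₀ + 1) (v₀ + 1 + 1) := by
          rw [cycle_adj_iff n hn]; exact Or.inl rfl
        have hd' : (cycleGraph n).dist v₀ (v₀ + 1 + 1) = 2 := by
          have h := cycle_dist_two n h4 (v₀ + 1)
          rw [show v₀ + 1 - 1 = v₀ by ring] at h
          exact h
        exact aux_lower n h4 f hf v₀ hmin hspan (v₀ + 1) (v₀ + 1 + 1) hadj' hcase hd'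
    · -- n = 3
      have hn3 : n = 3 := by omega
      subst hn3
      have ha1 : (cycleGraph 3).Adj v₀ (v₀ + 1) := by
        rw [cycle_adj_iff 3 (by norm_num)]; exact Or.inl rfl
      have ha2 : (cycleGraph 3).Adj (v₀ + 1) (v₀ + 1 + 1) := by
        rw [cycle_adj_iff 3 (by norm_num)]; exact Or.inl rfl
      have ha3 : (cycleGraph 3).Adj v₀ (v₀ + 1 + 1) := by
        rw [cycle_adj_iff 3 (by norm_num)]; right
        have h30 : (3 : Fin 3) = 0 := rfl
        rw [show v₀ + 1 + 1 + 1 = v₀ + 3 by ring, h30, add_zero]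
      have e1 := hf.1 _ _ ha1
      have e2 := hf.1 _ _ ha2
      have e3 := hf.1 _ _ ha3
      have m1 := hmin (v₀ + 1)
      have m2 := hmin (v₀ + 1 + 1)
      have s1 := hsp (v₀ + 1) v₀
      have s2 := hsp (v₀ + 1 + 1) v₀
      rcases le_abs.mp e1 with h | h <;> rcases le_abs.mp e2 with h' | h' <;>
        rcases le_abs.mp e3 with h'' | h'' <;> linarith
  exact le_antisymm (Nat.sInf_le hmem) (le_csInf ⟨4, hmem⟩ hlb)
end

section
/- Every simple graph G with maximum degree Δ has an L(2,1)-labeling with span at most Δ² + Δ, i.e. λ(G) ≤ Δ² + Δ. -/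
open SimpleGraph
set_option linter.unusedSectionVars false

namespace L21Aux
variable {V : Type*} [Fintype V] [DecidableEq V] (G : SimpleGraph V) [DecidableRel G.Adj]

def near2 (u v : V) : Prop := G.Adj u v ∨ ∃ w, G.Adj u w ∧ G.Adj w v

def packing (S : Finset V) : Prop := ∀ u ∈ S, ∀ v ∈ S, u ≠ v → ¬ near2 G u v

lemma near2_symm {u v : V} (h : near2 G u v) : near2 G v u := by
  rcases h with h | ⟨w, h1, h2⟩
  · exact Or.inl h.symm
  · exact Or.inr ⟨w, h2.symm, h1.symm⟩

lemma exists_maximal_packing (C : Finset V) :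
    ∃ S : Finset V, S ⊆ C ∧ packing G S ∧ ∀ v ∈ C, v ∉ S → ∃ u ∈ S, near2 G v u := by
  classical
  obtain ⟨S, hS, hmax⟩ := Finset.exists_max_image
    (C.powerset.filter (fun S => packing G S)) Finset.card
    ⟨∅, by rw [Finset.mem_filter]; exact ⟨Finset.empty_mem_powerset C, fun u hu => by simp at hu⟩⟩
  simp only [Finset.mem_filter, Finset.mem_powerset] at hS
  refine ⟨S, hS.1, hS.2, fun v hv hvS => ?_⟩
  by_contra hcon
  push_neg at hcon
  have hins : packing G (insert v S) := by
    intro a ha b hb hab h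
    rcases Finset.mem_insert.mp ha with ha' | ha' <;>
      rcases Finset.mem_insert.mp hb with hb' | hb'
    · exact hab (ha'.trans hb'.symm)
    · exact hcon b hb' (ha' ▸ h)
    · exact hcon a ha' (near2_symm G (hb' ▸ h))
    · exact hS.2 a ha' b hb' hab h
  have hmem : insert v S ∈ C.powerset.filter (fun S => packing G S) := by
    simp only [Finset.mem_filter, Finset.mem_powerset]
    exact ⟨Finset.insert_subset hv hS.1, hins⟩
  have := hmax _ hmem
  rw [Finset.card_insert_of_notMem hvS] at this
  omega

noncomputable def candAux (i : ℕ) (F : ∀ j : ℕ, j < i → Finset V) : Finset V := by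
  classical
  exact Finset.univ.filter fun v =>
    (∀ (j : ℕ) (hj : j < i), v ∉ F j hj) ∧
    (∀ (j : ℕ) (hj : j < i), j + 1 = i → ∀ u ∈ F j hj, ¬ G.Adj v u)

noncomputable def chain (i : ℕ) : Finset V :=
  (exists_maximal_packing G (candAux G i (fun j _ => chain j))).choose
termination_by i

noncomputable def cand (i : ℕ) : Finset V := candAux G i (fun j _ => chain G j)

lemma chain_spec (i : ℕ) : chain G i ⊆ cand G i ∧ packing G (chain G i) ∧
    ∀ v ∈ cand G i, v ∉ chain G i → ∃ u ∈ chain G i, near2 G v u := by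
  rw [chain]
  exact (exists_maximal_packing G (candAux G i (fun j _ => chain G j))).choose_spec

lemma mem_cand (i : ℕ) (v : V) : v ∈ cand G i ↔
    (∀ j < i, v ∉ chain G j) ∧ (∀ j < i, j + 1 = i → ∀ u ∈ chain G j, ¬ G.Adj v u) := by
  classical
  simp [cand, candAux]

end L21Aux
namespace L21Aux
variable {V : Type*} [Fintype V] [DecidableEq V] (G : SimpleGraph V) [DecidableRel G.Adj]

lemma chain_disjoint {i j : ℕ} (hij : i < j) {v : V} (hi : v ∈ chain G i)
    (hj : v ∈ chain G j) : False := by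
  have := ((mem_cand G j v).mp ((chain_spec G j).1 hj)).1 i hij
  exact this hi

/-- Coverage: every vertex is labeled by step `Δ² + Δ`. -/
lemma exists_chain_mem (v : V) : ∃ i ≤ G.maxDegree ^ 2 + G.maxDegree, v ∈ chain G i := by
  classical
  by_contra hcon
  push_neg at hcon
  set D := G.maxDegree with hD
  set N := D ^ 2 + D with hN
  have hunlab : ∀ j ≤ N, v ∉ chain G j := fun j hj h => hcon j hj h
  set nbrs : Finset V := G.neighborFinset v with hnbrs
  set ball2 : Finset V := nbrs ∪ nbrs.biUnion (fun w => G.neighborFinset w \ {v}) with hball2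
  -- blocking data for each step i ≤ N
  have hblock : ∀ i, ∃ p : Bool × V, i ≤ N →
      (p.1 = true → 1 ≤ i ∧ p.2 ∈ chain G (i - 1) ∧ G.Adj v p.2) ∧
      (p.1 = false → p.2 ∈ chain G i ∧ near2 G v p.2) := by
    intro i
    by_cases hi : i ≤ N
    · by_cases hc : v ∈ cand G i
      · obtain ⟨u, hu, hnu⟩ := (chain_spec G i).2.2 v hc (hunlab i hi)
        exact ⟨(false, u), fun _ => ⟨by simp, by simp [hu, hnu]⟩⟩
      · rw [mem_cand] at hc
        push_neg at hc
        have h1 : ∀ j < i, v ∉ chain G j := fun j hj =>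
          hunlab j (le_of_lt (lt_of_lt_of_le hj hi))
        obtain ⟨j, hj, hj1, u, hu, hadj⟩ := hc h1
        refine ⟨(true, u), fun _ => ⟨fun _ => ?_, by simp⟩⟩
        have hji : j = i - 1 := by omega
        exact ⟨by omega, hji ▸ hu, hadj⟩
    · exact ⟨(true, v), fun h => absurd h hi⟩
  choose g hg using hblock
  set T : Finset (Bool × V) :=
    nbrs.image (fun u => (true, u)) ∪ ball2.image (fun u => (false, u)) with hT
  have hmaps : ∀ i ∈ Finset.range (N + 1), g i ∈ T := by
    intro i hi
    have hi' : i ≤ N := Nat.lt_succ_iff.mp (Finset.mem_range.mp hi)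
    obtain ⟨hg1, hg2⟩ := hg i hi'
    cases hb : (g i).1 with
    | false =>
      obtain ⟨hmem, hnear⟩ := hg2 hb
      have hne : (g i).2 ≠ v := by
        rintro rfl
        exact hunlab i hi' hmem
      have hb2 : (g i).2 ∈ ball2 := by
        rcases hnear with hadj | ⟨w, hw1, hw2⟩
        · exact Finset.mem_union_left _ (by simp [hnbrs, hadj])
        · refine Finset.mem_union_right _ (Finset.mem_biUnion.mpr
            ⟨w, by simp [hnbrs, hw1], Finset.mem_sdiff.mpr ⟨by simp [hw2], by simp [hne]⟩⟩)
      have heq : g i = (false, (g i).2) := Prod.ext hb rfl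
      rw [heq]
      exact Finset.mem_union_right _ (Finset.mem_image_of_mem _ hb2)
    | true =>
      obtain ⟨_, hmem, hadj⟩ := hg1 hb
      have heq : g i = (true, (g i).2) := Prod.ext hb rfl
      rw [heq]
      exact Finset.mem_union_left _ (Finset.mem_image_of_mem _ (by simp [hnbrs, hadj]))
  have key : ∀ i j, i < j → j ≤ N → g i = g j → False := by
    intro i j hlt hj heq
    obtain ⟨hgi1, hgi2⟩ := hg i (by omega)
    obtain ⟨hgj1, hgj2⟩ := hg j hj
    cases hb : (g i).1 with
    | false =>
      obtain ⟨hmi, _⟩ := hgi2 hb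
      obtain ⟨hmj, _⟩ := hgj2 (heq ▸ hb)
      rw [heq] at hmi
      exact chain_disjoint G hlt hmi hmj
    | true =>
      obtain ⟨hi1, hmi, _⟩ := hgi1 hb
      obtain ⟨hj1, hmj, _⟩ := hgj1 (heq ▸ hb)
      rw [heq] at hmi
      rcases Nat.lt_or_ge (i - 1) (j - 1) with h | h
      · exact chain_disjoint G h hmi hmj
      · omega
  have hinj : Set.InjOn g (Finset.range (N + 1)) := by
    intro i hi j hj heq
    simp only [Finset.coe_range, Set.mem_Iio] at hi hj
    rcases Nat.lt_trichotomy i j with h | h | h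
    · exact absurd heq (fun heq => key i j h (by omega) heq)
    · exact h
    · exact absurd heq.symm (fun heq => key j i h (by omega) heq)
  have hcard : N + 1 ≤ T.card := by
    have := Finset.card_le_card_of_injOn g hmaps hinj
    simpa using this
  -- now bound T.card
  have hnbrs_card : nbrs.card ≤ D := by
    rw [hnbrs]
    exact (G.card_neighborFinset_eq_degree v) ▸ G.degree_le_maxDegree v
  have hball2_card : ball2.card ≤ D + D * (D - 1) := by
    refine le_trans (Finset.card_union_le _ _) (Nat.add_le_add hnbrs_card ?_)
    refine le_trans (Finset.card_biUnion_le) ?_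
    have hterm : ∀ w ∈ nbrs, (G.neighborFinset w \ {v}).card ≤ D - 1 := by
      intro w hw
      have hv : v ∈ G.neighborFinset w := by
        simp only [hnbrs, mem_neighborFinset] at hw ⊢
        exact hw.symm
      have hsub : ({v} : Finset V) ⊆ G.neighborFinset w := Finset.singleton_subset_iff.mpr hv
      rw [Finset.card_sdiff_of_subset hsub, Finset.card_singleton]
      have : (G.neighborFinset w).card ≤ D :=
        (G.card_neighborFinset_eq_degree w) ▸ G.degree_le_maxDegree w
      omega
    calc ∑ w ∈ nbrs, (G.neighborFinset w \ {v}).card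
        ≤ ∑ _w ∈ nbrs, (D - 1) := Finset.sum_le_sum hterm
      _ = nbrs.card * (D - 1) := by rw [Finset.sum_const, smul_eq_mul]
      _ ≤ D * (D - 1) := Nat.mul_le_mul_right _ hnbrs_card
  have hT_card : T.card ≤ D + (D + D * (D - 1)) := by
    refine le_trans (Finset.card_union_le _ _) (Nat.add_le_add ?_ ?_)
    · exact le_trans (Finset.card_image_le) hnbrs_card
    · exact le_trans (Finset.card_image_le) hball2_card
  have hDD : D + D * (D - 1) ≤ D ^ 2 := by
    rcases Nat.eq_zero_or_pos D with h | h
    · simp [h]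
    · have h1 : D - 1 + 1 = D := Nat.sub_add_cancel h
      have : D + D * (D - 1) = D * (D - 1 + 1) := by ring
      rw [this, h1, pow_two]
  omega

end L21Aux
namespace L21Aux
variable {V : Type*} [Fintype V] [DecidableEq V] (G : SimpleGraph V) [DecidableRel G.Adj]

noncomputable def labelTime [Nonempty V] (v : V) : ℕ := sInf {i | v ∈ chain G i}

lemma labelTime_mem [Nonempty V] (v : V) : v ∈ chain G (labelTime G v) := by
  obtain ⟨i, _, hi⟩ := exists_chain_mem G v
  exact Nat.sInf_mem (⟨i, hi⟩ : {i | v ∈ chain G i}.Nonempty)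

lemma labelTime_le [Nonempty V] (v : V) : labelTime G v ≤ G.maxDegree ^ 2 + G.maxDegree := by
  obtain ⟨i, hle, hi⟩ := exists_chain_mem G v
  exact le_trans (Nat.sInf_le hi) hle

lemma labelTime_eq [Nonempty V] {v : V} {i : ℕ} (h : v ∈ chain G i) : labelTime G v = i := by
  rcases Nat.lt_trichotomy (labelTime G v) i with hlt | he | hlt
  · exact absurd (chain_disjoint G hlt (labelTime_mem G v) h) id
  · exact he
  · exact absurd (chain_disjoint G hlt h (labelTime_mem G v)) id

lemma isL21_labelTime [Nonempty V] : IsL21 G (fun v => (labelTime G v : ℤ)) := by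
  have hnotsucc : ∀ (a b : V), G.Adj a b → labelTime G a + 1 ≠ labelTime G b := by
    intro a b hab h
    have hc := (mem_cand G (labelTime G b) b).mp ((chain_spec G _).1 (labelTime_mem G b))
    exact hc.2 (labelTime G a) (by omega) h a (labelTime_mem G a) hab.symm
  constructor
  · intro x y hadj
    have hne : labelTime G x ≠ labelTime G y := fun he =>
      (chain_spec G _).2.1 x (labelTime_mem G x) y (he ▸ labelTime_mem G y)
        (G.ne_of_adj hadj) (Or.inl hadj)
    have h1 := hnotsucc x y hadj
    have h2 := hnotsucc y x hadj.symm
    simp only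
    rcases abs_cases ((labelTime G x : ℤ) - labelTime G y) with ⟨he, _⟩ | ⟨he, _⟩ <;>
      rw [he] <;> omega
  · intro x y hdist
    simp only
    have hne : x ≠ y := by
      rintro rfl
      rw [SimpleGraph.dist_self] at hdist
      omega
    obtain ⟨p, hp⟩ := exists_walk_of_dist_ne_zero (by omega : G.dist x y ≠ 0)
    rw [hdist] at hp
    have hnear : near2 G x y := by
      cases p with
      | nil => simp at hp
      | cons h q =>
        cases q with
        | nil => simp at hp
        | cons h' q' =>
          cases q' with
          | nil => exact Or.inr ⟨_, h, h'⟩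
          | cons h'' q'' => simp [SimpleGraph.Walk.length_cons] at hp
    have hne2 : labelTime G x ≠ labelTime G y := by
      intro he
      exact (chain_spec G (labelTime G x)).2.1 x (labelTime_mem G x) y
        (he ▸ labelTime_mem G y) hne hnear
    rcases abs_cases ((labelTime G x : ℤ) - labelTime G y) with ⟨he, _⟩ | ⟨he, _⟩ <;>
      rw [he] <;> omega

end L21Aux

open L21Aux in
theorem lambda21_le_maxDegree_sq_add_maxDegree {V : Type*} [Fintype V] (G : SimpleGraph V)
    [DecidableRel G.Adj] :
    lambda21 G ≤ G.maxDegree ^ 2 + G.maxDegree := by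
  classical
  cases isEmpty_or_nonempty V with
  | inl h =>
    have : lambda21 G = 0 := by
      have : (0 : ℕ) ∈ {s | ∃ f : V → ℤ, IsL21 G f ∧ labelSpan f = s} := by
        refine ⟨fun _ => 0, ⟨fun x => isEmptyElim x, fun x => isEmptyElim x⟩, ?_⟩
        simp [labelSpan]
      exact Nat.le_zero.mp (Nat.sInf_le this)
    omega
  | inr h =>
    set f : V → ℤ := fun v => (labelTime G v : ℤ) with hf
    have hmem : labelSpan f ∈ {s | ∃ f : V → ℤ, IsL21 G f ∧ labelSpan f = s} :=
      ⟨f, isL21_labelTime G, rfl⟩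
    refine le_trans (Nat.sInf_le hmem) ?_
    rw [labelSpan]
    refine Finset.sup_le ?_
    intro p _
    have h1 : (0 : ℤ) ≤ f p.2 := by simp [hf]
    have h2 : f p.1 ≤ (G.maxDegree ^ 2 + G.maxDegree : ℕ) := by
      simp only [hf]
      exact_mod_cast labelTime_le G p.1
    omega
end

section
/- Every simple graph G with maximum degree Δ has an L(2,1)-labeling with span at most Δ² + 2Δ. -/
open SimpleGraph Finset

def pickL21 {V : Type*} [Fintype V] (G : SimpleGraph V) [DecidableRel G.Adj]
    {n : ℕ} (e : V ≃ Fin n) (v : V) (m : ℕ) (h : m ≤ n) (g : Fin m → ℕ) : ℕ :=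
  (((Finset.range (G.maxDegree ^ 2 + 2 * G.maxDegree + 1)).filter fun c : ℕ =>
      ∀ j : Fin m,
        (G.Adj v (e.symm (Fin.castLE h j)) → 2 ≤ |(c : ℤ) - (g j : ℤ)|) ∧
        ((∃ w, G.Adj v w ∧ G.Adj w (e.symm (Fin.castLE h j))) →
          (c : ℤ) ≠ (g j : ℤ))).min).getD 0

lemma pickL21_spec {V : Type*} [Fintype V] (G : SimpleGraph V) [DecidableRel G.Adj]
    {n : ℕ} (e : V ≃ Fin n) (v : V) (m : ℕ) (h : m ≤ n) (g : Fin m → ℕ)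
    (hv : ∀ j : Fin m, v ≠ e.symm (Fin.castLE h j)) :
    pickL21 G e v m h g < G.maxDegree ^ 2 + 2 * G.maxDegree + 1 ∧
    ∀ j : Fin m,
      (G.Adj v (e.symm (Fin.castLE h j)) →
        2 ≤ |(pickL21 G e v m h g : ℤ) - (g j : ℤ)|) ∧
      ((∃ w, G.Adj v w ∧ G.Adj w (e.symm (Fin.castLE h j))) →
        (pickL21 G e v m h g : ℤ) ≠ (g j : ℤ)) := by
  classical
  set D := G.maxDegree with hD
  set N := D ^ 2 + 2 * D + 1 with hN
  set u : Fin m → V := fun j => e.symm (Fin.castLE h j) with hu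
  have hinj : Function.Injective u := by
    intro a b hab
    have := e.symm.injective hab
    exact Fin.castLE_injective h this
  set A : Finset (Fin m) := Finset.univ.filter fun j => G.Adj v (u j) with hA
  set B : Finset (Fin m) := Finset.univ.filter fun j => ∃ w, G.Adj v w ∧ G.Adj w (u j) with hB
  set Bad : Finset ℤ :=
    (A.biUnion fun j => {(g j : ℤ) - 1, (g j : ℤ), (g j : ℤ) + 1}) ∪
      (B.biUnion fun j => {(g j : ℤ)}) with hBad
  have hAcard : A.card ≤ D := by
    have h1 : A.image u ⊆ G.neighborFinset v := by
      intro x hx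
      simp only [Finset.mem_image] at hx
      obtain ⟨j, hj, rfl⟩ := hx
      simp only [hA, Finset.mem_filter] at hj
      simpa [SimpleGraph.mem_neighborFinset] using hj.2
    calc A.card = (A.image u).card := (Finset.card_image_of_injective _ hinj).symm
      _ ≤ (G.neighborFinset v).card := Finset.card_le_card h1
      _ = G.degree v := G.card_neighborFinset_eq_degree v
      _ ≤ D := G.degree_le_maxDegree v
  have hBcard : B.card ≤ D * (D - 1) := by
    have h1 : B.image u ⊆ (G.neighborFinset v).biUnion fun w => G.neighborFinset w \ {v} := by
      intro x hx
      simp only [Finset.mem_image] at hx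
      obtain ⟨j, hj, rfl⟩ := hx
      simp only [hB, Finset.mem_filter] at hj
      obtain ⟨w, hvw, hwu⟩ := hj.2
      simp only [Finset.mem_biUnion, SimpleGraph.mem_neighborFinset, Finset.mem_sdiff,
        Finset.mem_singleton]
      exact ⟨w, hvw, hwu, fun hh => hv j (hh ▸ rfl)⟩
    have h2 : ((G.neighborFinset v).biUnion fun w => G.neighborFinset w \ {v}).card
        ≤ (G.neighborFinset v).card * (D - 1) := by
      apply Finset.card_biUnion_le_card_mul
      intro w hw
      have hwv : v ∈ G.neighborFinset w := by
        rw [SimpleGraph.mem_neighborFinset] at hw ⊢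
        exact hw.symm
      have : (G.neighborFinset w \ {v}).card = G.degree w - 1 := by
        rw [Finset.card_sdiff_of_subset (by simpa using hwv), Finset.card_singleton,
          G.card_neighborFinset_eq_degree]
      rw [this]
      exact Nat.sub_le_sub_right (G.degree_le_maxDegree w) 1
    calc B.card = (B.image u).card := (Finset.card_image_of_injective _ hinj).symm
      _ ≤ _ := Finset.card_le_card h1
      _ ≤ (G.neighborFinset v).card * (D - 1) := h2
      _ ≤ D * (D - 1) := by
          apply Nat.mul_le_mul_right
          rw [G.card_neighborFinset_eq_degree]
          exact G.degree_le_maxDegree v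
  have hBadcard : Bad.card ≤ D ^ 2 + 2 * D := by
    have c1 : (A.biUnion fun j => ({(g j : ℤ) - 1, (g j : ℤ), (g j : ℤ) + 1} : Finset ℤ)).card
        ≤ A.card * 3 := by
      apply Finset.card_biUnion_le_card_mul
      intro j _
      calc ({(g j : ℤ) - 1, (g j : ℤ), (g j : ℤ) + 1} : Finset ℤ).card
          ≤ ({(g j : ℤ), (g j : ℤ) + 1} : Finset ℤ).card + 1 := Finset.card_insert_le _ _
        _ ≤ 3 := by
            have := Finset.card_insert_le ((g j : ℤ)) ({(g j : ℤ) + 1} : Finset ℤ)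
            simp only [Finset.card_singleton] at this
            omega
    have c2 : (B.biUnion fun j => ({(g j : ℤ)} : Finset ℤ)).card ≤ B.card * 1 := by
      apply Finset.card_biUnion_le_card_mul
      intro j _
      simp
    have := Finset.card_union_le
      (A.biUnion fun j => ({(g j : ℤ) - 1, (g j : ℤ), (g j : ℤ) + 1} : Finset ℤ))
      (B.biUnion fun j => ({(g j : ℤ)} : Finset ℤ))
    have hDD : D * (D - 1) + 3 * D ≤ D ^ 2 + 2 * D := by
      rcases D with _ | k
      · simp
      · simp only [Nat.add_sub_cancel, pow_two]
        nlinarith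
    calc Bad.card ≤ _ := this
      _ ≤ A.card * 3 + B.card * 1 := Nat.add_le_add c1 c2
      _ ≤ D * 3 + D * (D - 1) * 1 := by
          exact Nat.add_le_add (Nat.mul_le_mul_right 3 hAcard) (Nat.mul_le_mul_right 1 hBcard)
      _ ≤ D ^ 2 + 2 * D := by rw [Nat.mul_one]; linarith [hDD]
  -- find a good label
  have hnsub : ¬ ((Finset.range N).image fun c : ℕ => (c : ℤ)) ⊆ Bad := by
    intro hs
    have := Finset.card_le_card hs
    rw [Finset.card_image_of_injective _ (fun a b => by exact_mod_cast id),
      Finset.card_range] at this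
    omega
  obtain ⟨z, hz, hzB⟩ := Finset.not_subset.mp hnsub
  obtain ⟨c, hc, rfl⟩ := Finset.mem_image.mp hz
  have hgood : ∀ j : Fin m,
      (G.Adj v (u j) → 2 ≤ |(c : ℤ) - (g j : ℤ)|) ∧
      ((∃ w, G.Adj v w ∧ G.Adj w (u j)) → (c : ℤ) ≠ (g j : ℤ)) := by
    intro j
    constructor
    · intro hadj
      have hjA : j ∈ A := by simp [hA, hadj]
      have h1 : (c : ℤ) ≠ (g j : ℤ) - 1 := by
        intro hh; exact hzB (by rw [hh]; simp [hBad]; left; exact ⟨j, hjA, by simp⟩)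
      have h2 : (c : ℤ) ≠ (g j : ℤ) := by
        intro hh; exact hzB (by rw [hh]; simp [hBad]; left; exact ⟨j, hjA, by simp⟩)
      have h3 : (c : ℤ) ≠ (g j : ℤ) + 1 := by
        intro hh; exact hzB (by rw [hh]; simp [hBad]; left; exact ⟨j, hjA, by simp⟩)
      rw [le_abs]
      omega
    · intro hnear
      have hjB : j ∈ B := by simp [hB]; exact hnear
      intro hh; exact hzB (by rw [hh]; simp [hBad]; right; exact ⟨j, hjB, rfl⟩)
  -- the filter set is nonempty, and pick is a member
  set S := (Finset.range N).filter fun c : ℕ =>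
      ∀ j : Fin m,
        (G.Adj v (e.symm (Fin.castLE h j)) → 2 ≤ |(c : ℤ) - (g j : ℤ)|) ∧
        ((∃ w, G.Adj v w ∧ G.Adj w (e.symm (Fin.castLE h j))) →
          (c : ℤ) ≠ (g j : ℤ)) with hS
  have hcS : c ∈ S := by
    rw [hS, Finset.mem_filter]
    exact ⟨hc, hgood⟩
  have hne : S.Nonempty := ⟨c, hcS⟩
  obtain ⟨a, ha⟩ := Finset.min_of_nonempty hne
  have haS : a ∈ S := Finset.mem_of_min ha
  have hpick : pickL21 G e v m h g = a := by
    rw [pickL21]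
    rw [← hS, ha]
    rfl
  rw [hS, Finset.mem_filter, Finset.mem_range] at haS
  rw [hpick]
  exact haS

def greedyVec {V : Type*} [Fintype V] (G : SimpleGraph V) [DecidableRel G.Adj]
    {n : ℕ} (e : V ≃ Fin n) : (m : ℕ) → m ≤ n → (Fin m → ℕ)
  | 0, _ => Fin.elim0
  | m + 1, h =>
    Fin.snoc (greedyVec G e m (Nat.le_of_succ_le h))
      (pickL21 G e (e.symm ⟨m, h⟩) m (Nat.le_of_succ_le h)
        (greedyVec G e m (Nat.le_of_succ_le h)))

lemma greedyVec_castLE {V : Type*} [Fintype V] (G : SimpleGraph V) [DecidableRel G.Adj]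
    {n : ℕ} (e : V ≃ Fin n) : ∀ (m' : ℕ) (h' : m' ≤ n) (m : ℕ) (h : m ≤ m') (j : Fin m),
    greedyVec G e m' h' (Fin.castLE h j) = greedyVec G e m (h.trans h') j := by
  intro m'
  induction m' with
  | zero => intro h' m h j; exact absurd j.isLt (by omega)
  | succ k ih =>
    intro h' m h j
    rcases Nat.lt_or_ge m (k + 1) with hm | hm
    · have hm' : m ≤ k := by omega
      have h1 : (Fin.castLE h j : Fin (k + 1)) = Fin.castSucc (Fin.castLE hm' j) := by
        ext; simp
      rw [greedyVec, h1, Fin.snoc_castSucc]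
      exact ih (Nat.le_of_succ_le h') m hm' j
    · have hm' : m = k + 1 := by omega
      subst hm'
      have h1 : Fin.castLE h j = j := by ext; simp
      rw [h1]

lemma greedyVec_spec {V : Type*} [Fintype V] (G : SimpleGraph V) [DecidableRel G.Adj]
    {n : ℕ} (e : V ≃ Fin n) (i : Fin n) :
    greedyVec G e n le_rfl i < G.maxDegree ^ 2 + 2 * G.maxDegree + 1 ∧
    ∀ j : Fin n, j < i →
      (G.Adj (e.symm i) (e.symm j) →
        2 ≤ |(greedyVec G e n le_rfl i : ℤ) - (greedyVec G e n le_rfl j : ℤ)|) ∧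
      ((∃ w, G.Adj (e.symm i) w ∧ G.Adj w (e.symm j)) →
        (greedyVec G e n le_rfl i : ℤ) ≠ (greedyVec G e n le_rfl j : ℤ)) := by
  set m := i.val with hmdef
  have hm1 : m + 1 ≤ n := i.isLt
  have hm : m ≤ n := Nat.le_of_succ_le hm1
  have hieq : i = Fin.castLE hm1 (Fin.last m) := by ext; simp [hmdef]
  have hgi : greedyVec G e n le_rfl i
      = pickL21 G e (e.symm ⟨m, hm1⟩) m hm (greedyVec G e m hm) := by
    rw [hieq, greedyVec_castLE G e n le_rfl (m + 1) hm1 (Fin.last m), greedyVec,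
      Fin.snoc_last]
  have hvi : e.symm ⟨m, hm1⟩ = e.symm i := by
    have hh : (⟨m, hm1⟩ : Fin n) = i := by ext; simp [hmdef]
    rw [hh]
  have hv : ∀ j : Fin m, e.symm (⟨m, hm1⟩ : Fin n) ≠ e.symm (Fin.castLE hm j) := by
    intro j hh
    have := e.symm.injective hh
    have : m = j.val := congrArg Fin.val this
    omega
  have spec := pickL21_spec G e (e.symm ⟨m, hm1⟩) m hm (greedyVec G e m hm) hv
  have hgj : ∀ j : Fin n, (hj : j.val < m) →
      greedyVec G e n le_rfl j = greedyVec G e m hm ⟨j.val, hj⟩ := by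
    intro j hj
    have hje : j = Fin.castLE hm ⟨j.val, hj⟩ := by ext; simp
    have h5 := greedyVec_castLE G e n le_rfl m hm ⟨j.val, hj⟩
    rw [← hje] at h5
    exact h5
  constructor
  · rw [hgi]; exact spec.1
  · intro j hj
    have hjm : j.val < m := hj
    have hsymm : e.symm j = e.symm (Fin.castLE hm ⟨j.val, hjm⟩) := by
      have hh : j = Fin.castLE hm ⟨j.val, hjm⟩ := by ext; simp
      rw [← hh]
    have := spec.2 ⟨j.val, hjm⟩
    rw [hgi, hgj j hjm]
    rw [hvi] at this
    rw [hsymm]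
    exact this

theorem exists_L21_span_le_maxDegree_sq_add_two_maxDegree {V : Type*} [Fintype V]
    (G : SimpleGraph V) [DecidableRel G.Adj] :
    ∃ f : V → ℤ, IsL21 G f ∧ labelSpan f ≤ G.maxDegree ^ 2 + 2 * G.maxDegree := by
  classical
  set n := Fintype.card V with hn
  set e := Fintype.equivFin V with he
  set g : Fin n → ℕ := greedyVec G e n le_rfl with hg
  refine ⟨fun v => (g (e v) : ℤ), ⟨?_, ?_⟩, ?_⟩
  · intro x y hxy
    have hne : e x ≠ e y := fun hh => hxy.ne (e.injective hh)
    rcases lt_or_gt_of_ne hne with hlt | hlt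
    · have := (greedyVec_spec G e (e y)).2 (e x) hlt
      have hadj : G.Adj (e.symm (e y)) (e.symm (e x)) := by
        simpa using hxy.symm
      have h2 := this.1 hadj
      rw [abs_sub_comm] at h2
      simpa using h2
    · have := (greedyVec_spec G e (e x)).2 (e y) hlt
      have hadj : G.Adj (e.symm (e x)) (e.symm (e y)) := by
        simpa using hxy
      simpa using this.1 hadj
  · intro x y hdist
    have hxy : x ≠ y := by
      intro hh; subst hh; simp [SimpleGraph.dist_self] at hdist
    obtain ⟨w, hxw, hwy⟩ : ∃ w, G.Adj x w ∧ G.Adj w y := by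
      have hr : G.Reachable x y := SimpleGraph.Reachable.of_dist_ne_zero (by omega)
      obtain ⟨p, hp⟩ := hr.exists_walk_length_eq_dist
      rw [hdist] at hp
      cases p with
      | nil => simp at hp
      | cons h q =>
        cases q with
        | nil => simp at hp
        | cons h' q' =>
          cases q' with
          | nil => exact ⟨_, h, h'⟩
          | cons h'' q'' => simp [SimpleGraph.Walk.length_cons] at hp
    have hne : e x ≠ e y := fun hh => hxy (e.injective hh)
    have key : (g (e x) : ℤ) ≠ (g (e y) : ℤ) := by
      rcases lt_or_gt_of_ne hne with hlt | hlt
      · have := (greedyVec_spec G e (e y)).2 (e x) hlt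
        have hnear : ∃ u, G.Adj (e.symm (e y)) u ∧ G.Adj u (e.symm (e x)) := by
          refine ⟨w, ?_, ?_⟩ <;> simp [hwy.symm, hxw.symm]
        have := this.2 hnear
        exact fun hh => this hh.symm
      · have := (greedyVec_spec G e (e x)).2 (e y) hlt
        have hnear : ∃ u, G.Adj (e.symm (e x)) u ∧ G.Adj u (e.symm (e y)) := by
          refine ⟨w, ?_, ?_⟩ <;> simp [hxw, hwy]
        have := this.2 hnear
        simpa using this
    have : (g (e x) : ℤ) - (g (e y) : ℤ) ≠ 0 := fun hh => key (by omega)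
    exact Int.one_le_abs this
  · apply Finset.sup_le
    intro p _
    have h1 := (greedyVec_spec G e (e p.1)).1
    have h2 : (0 : ℤ) ≤ (g (e p.2) : ℤ) := Int.natCast_nonneg _
    rw [Int.toNat_le]
    push_cast
    have : (g (e p.1) : ℤ) < (G.maxDegree : ℤ) ^ 2 + 2 * G.maxDegree + 1 := by
      exact_mod_cast h1
    linarith
end

section
/- Let G be a simple graph on n ≥ 3 vertices. If for every integer k with 1 ≤ k ≤ (n−1)/2 the number of vertices of degree at most k is strictly less than k, then G contains a hamilton cycle. -/
open SimpleGraph List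

namespace PosaAux

variable {V : Type*} [Fintype V] [DecidableEq V]

/-- Cyclic hamiltonian list. -/
def IsHC (H : SimpleGraph V) (l : List V) : Prop :=
  l.Nodup ∧ (∀ v : V, v ∈ l) ∧ l.Chain' H.Adj ∧
    ∀ h : l ≠ [], H.Adj (l.getLast h) (l.head h)

def HamP (H : SimpleGraph V) : Prop := ∃ l, IsHC H l

omit [Fintype V] [DecidableEq V] in

lemma exists_walk_of_chain (H : SimpleGraph V) :
    ∀ (l : List V) (a b : V), List.Chain H.Adj a l →
      (a :: l).getLast (List.cons_ne_nil a l) = b → ∃ w : H.Walk a b, w.support = a :: l := by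
  intro l
  induction l with
  | nil => intro a b _ hb; simp at hb; subst hb; exact ⟨Walk.nil, rfl⟩
  | cons c l ih =>
    intro a b hc hb
    change List.IsChain H.Adj (a :: c :: l) at hc
    rw [List.chain_cons] at hc
    obtain ⟨w, hw⟩ := ih c b hc.2 (by rw [← hb, List.getLast_cons (List.cons_ne_nil c l)])
    exact ⟨Walk.cons hc.1 w, by simp [hw]⟩

omit [Fintype V] [DecidableEq V] in

lemma edge_not_mem {H : SimpleGraph V} {a b : V} (w : H.Walk a b) (hn : w.support.Nodup)
    (hl : 3 ≤ w.support.length) : s(b, a) ∉ w.edges := by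
  cases w with
  | nil => simp
  | @cons _ c _ h p =>
    intro he
    rw [Walk.edges_cons, List.mem_cons] at he
    rw [Walk.support_cons, List.nodup_cons] at hn
    have hab : a ∉ p.support := hn.1
    rcases he with he | he
    · rw [Sym2.eq_iff] at he
      rcases he with ⟨rfl, rfl⟩ | ⟨rfl, -⟩
      · exact hab p.end_mem_support
      · have hp : p.IsPath := Walk.IsPath.mk' hn.2
        have : p = Walk.nil := by
          have := SimpleGraph.Path.loop_eq (G := H) ⟨p, hp⟩
          exact congrArg Subtype.val this
        subst this
        simp [Walk.support_cons] at hl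
    · exact hab (p.snd_mem_support_of_mem_edges he)

lemma hamP_isHamiltonian {H : SimpleGraph V} (h3 : 3 ≤ Fintype.card V) (hp : HamP H) :
    H.IsHamiltonian := by
  obtain ⟨l, hnd, hmem, hch, hwrap⟩ := hp
  have hlu : l.toFinset = Finset.univ := by ext v; simp [hmem]
  have hlen : l.length = Fintype.card V := by
    rw [← List.toFinset_card_of_nodup hnd, hlu, Finset.card_univ]
  cases l with
  | nil => simp at hlen; omega
  | cons a t =>
    have hne : (a :: t) ≠ [] := List.cons_ne_nil a t
    set b := (a :: t).getLast hne with hb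
    have hchain : List.Chain H.Adj a t := hch
    obtain ⟨w, hw⟩ := exists_walk_of_chain H t a b hchain rfl
    have hwn : w.support.Nodup := hw ▸ hnd
    have hwl : 3 ≤ w.support.length := by rw [hw]; omega
    have hpath : w.IsPath := Walk.IsPath.mk' hwn
    have hadj : H.Adj b a := hwrap hne
    have hcyc : (Walk.cons hadj w).IsCycle := by
      rw [Walk.cons_isCycle_iff]
      exact ⟨hpath, edge_not_mem w hwn hwl⟩
    intro _
    refine ⟨b, Walk.cons hadj w, ?_⟩
    rw [Walk.isHamiltonianCycle_iff_isCycle_and_support_count_tail_eq_one]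
    refine ⟨hcyc, fun v => ?_⟩
    rw [Walk.support_cons, List.tail_cons, hw]
    exact List.count_eq_one_of_mem hnd (hmem v)

omit [Fintype V] [DecidableEq V] in
lemma isHC_rotate_one {H : SimpleGraph V} {l : List V} (h : IsHC H l) : IsHC H (l.rotate 1) := by
  obtain ⟨hnd, hmem, hch, hwrap⟩ := h
  cases l with
  | nil => exact ⟨hnd, hmem, hch, fun h => absurd rfl h⟩
  | cons a t =>
    cases t with
    | nil => exact absurd (hwrap (by simp)) (H.irrefl)
    | cons c t' =>
      have hrot : (a :: c :: t').rotate 1 = (c :: t') ++ [a] := by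
        simp [List.rotate_cons_succ]
      rw [hrot]
      have hne : (a :: c :: t') ≠ [] := by simp
      have hch' : List.Chain' H.Adj (c :: t') := (List.isChain_cons_cons.mp hch).2
      refine ⟨?_, ?_, ?_, ?_⟩
      · rw [← hrot]; exact (List.nodup_rotate).mpr hnd
      · intro v
        have := hmem v
        simp at this ⊢; tauto
      · show List.IsChain _ _; rw [List.isChain_append]
        refine ⟨hch', List.isChain_singleton a, ?_⟩
        intro x hx y hy
        simp at hy; subst hy
        have hx' : x = (c :: t').getLast (by simp) := by
          rwa [List.getLast?_eq_getLast (by simp), Option.mem_some_iff, eq_comm] at hx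
        subst hx'
        have := hwrap hne
        rwa [List.getLast_cons (by simp)] at this
      · intro h2
        rw [List.getLast_append]
        have : ((c :: t') ++ [a]).head h2 = c := by simp
        rw [this]
        exact (List.isChain_cons_cons.mp hch).1

omit [Fintype V] [DecidableEq V] in
lemma isHC_rotate {H : SimpleGraph V} {l : List V} (h : IsHC H l) (k : ℕ) :
    IsHC H (l.rotate k) := by
  induction k with
  | zero => simpa using h
  | succ m ih => rw [← List.rotate_rotate]; exact isHC_rotate_one ih

lemma deg_sum_le {H : SimpleGraph V} [DecidableRel H.Adj] {l : List V} (hne : l ≠ [])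
    (hnd : l.Nodup) (hmem : ∀ v, v ∈ l) (hch : l.Chain' H.Adj)
    (h3 : 3 ≤ Fintype.card V)
    (hnadj : ¬ H.Adj (l.head hne) (l.getLast hne))
    (hnc : ∀ m : List V, ¬ IsHC H m) :
    H.degree (l.head hne) + H.degree (l.getLast hne) ≤ Fintype.card V - 1 := by
  classical
  set a := l.head hne with ha
  set b := l.getLast hne with hb
  set N := l.length with hN
  clear_value N
  have hlu : l.toFinset = Finset.univ := by ext v; simp [hmem]
  have hNcard : N = Fintype.card V := by
    rw [hN, ← List.toFinset_card_of_nodup hnd, hlu, Finset.card_univ]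
  set g : ℕ → V := fun i => l.getD i a with hg
  have hgel : ∀ {i : ℕ} (h : i < N), g i = l[i]'(by omega) := fun {i} h => List.getD_eq_getElem l a (by omega)
  have hg0 : g 0 = a := by rw [hgel (by omega), ha, List.head_eq_getElem_zero]
  have hgN : g (N - 1) = b := by
    rw [hgel (by omega), hb, List.getLast_eq_getElem]
    congr 1
    omega
  have hginj : ∀ {i j : ℕ}, i < N → j < N → g i = g j → i = j := by
    intro i j hi hj hij
    rw [hgel hi, hgel hj] at hij
    exact (hnd.getElem_inj_iff).mp hij
  have hadj : ∀ i : ℕ, i + 1 < N → H.Adj (g i) (g (i + 1)) := by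
    intro i hi
    have := List.isChain_iff_getElem.mp hch i (by omega)
    simpa [List.get_eq_getElem, hgel (by omega : i < N), hgel hi] using this
  -- the two index sets
  set S : Finset ℕ := (Finset.range (N - 1)).filter (fun i => H.Adj a (g (i + 1))) with hS
  set T : Finset ℕ := (Finset.range (N - 1)).filter (fun i => H.Adj (g i) b) with hT
  have h3N : 3 ≤ N := by rw [hNcard]; exact h3
  have hgsurj : ∀ v : V, ∃ i : ℕ, i < N ∧ g i = v := by
    intro v
    obtain ⟨i, hi, hv⟩ := List.getElem_of_mem (hmem v)
    exact ⟨i, by omega, by rw [hgel (by omega)]; exact hv⟩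
  have hScard : S.card = H.degree a := by
    rw [SimpleGraph.degree]
    apply Finset.card_nbij (fun i => g (i + 1))
    · intro i hi
      simp only [Finset.mem_coe, hS, Finset.mem_filter] at hi
      rw [Finset.mem_coe, SimpleGraph.mem_neighborFinset]
      exact hi.2
    · intro i hi j hj hij
      simp only [Finset.coe_filter, Set.mem_setOf_eq, Finset.mem_range, hS] at hi hj
      have := hginj (by omega) (by omega) hij
      omega
    · intro v hv
      rw [Finset.mem_coe, SimpleGraph.mem_neighborFinset] at hv
      obtain ⟨i, hi, hgi⟩ := hgsurj v
      have hi0 : i ≠ 0 := by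
        intro h; subst h; rw [hg0] at hgi; subst hgi; exact H.irrefl hv
      refine ⟨i - 1, ?_, ?_⟩
      · rw [Finset.mem_coe, hS, Finset.mem_filter, Finset.mem_range]
        refine ⟨by omega, ?_⟩
        rw [(by omega : i - 1 + 1 = i), hgi]; exact hv
      · simp only [(by omega : i - 1 + 1 = i), hgi]
  have hTcard : T.card = H.degree b := by
    rw [SimpleGraph.degree]
    apply Finset.card_nbij (fun i => g i)
    · intro i hi
      simp only [Finset.mem_coe, hT, Finset.mem_filter] at hi
      rw [Finset.mem_coe, SimpleGraph.mem_neighborFinset]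
      exact hi.2.symm
    · intro i hi j hj hij
      simp only [Finset.coe_filter, Set.mem_setOf_eq, Finset.mem_range, hT] at hi hj
      exact hginj (by omega) (by omega) hij
    · intro v hv
      rw [Finset.mem_coe, SimpleGraph.mem_neighborFinset] at hv
      obtain ⟨i, hi, hgi⟩ := hgsurj v
      have hiN : i ≠ N - 1 := by
        intro h; subst h; rw [hgN] at hgi; subst hgi; exact H.irrefl hv
      have h3N : 3 ≤ N := by rw [hNcard]; exact h3
      refine ⟨i, ?_, hgi⟩
      rw [Finset.mem_coe, hT, Finset.mem_filter, Finset.mem_range]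
      exact ⟨by omega, by rw [hgi]; exact hv.symm⟩
  -- disjointness via cycle construction
  have hdisj : Disjoint S T := by
    rw [Finset.disjoint_left]
    intro i hiS hiT
    rw [hS, Finset.mem_filter, Finset.mem_range] at hiS
    rw [hT, Finset.mem_filter] at hiT
    obtain ⟨hilt, hSadj⟩ := hiS
    have hTadj := hiT.2
    have hi1 : i + 1 < N := by omega
    -- build the rotated hamiltonian cycle list
    set m : List V := l.take (i + 1) ++ (l.drop (i + 1)).reverse with hm
    have htne : l.take (i + 1) ≠ [] := by
      apply List.ne_nil_of_length_pos
      rw [List.length_take]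
      omega
    have hdne : l.drop (i + 1) ≠ [] := by
      apply List.ne_nil_of_length_pos
      rw [List.length_drop]
      omega
    have hperm : m ~ l := by
      rw [hm]
      calc l.take (i+1) ++ (l.drop (i+1)).reverse
          ~ l.take (i+1) ++ l.drop (i+1) := (List.reverse_perm _).append_left _
        _ = l := List.take_append_drop _ _
    refine hnc m ⟨hperm.nodup_iff.mpr hnd, fun v => hperm.mem_iff.mpr (hmem v), ?_, ?_⟩
    · rw [hm]; show List.IsChain _ _; rw [List.isChain_append]
      refine ⟨List.IsChain.take hch _, List.isChain_reverse.mpr ((List.IsChain.drop hch _).imp fun _ _ h => h.symm), ?_⟩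
      intro x hx y hy
      rw [List.getLast?_eq_getLast htne, Option.mem_some_iff] at hx
      rw [List.head?_reverse, List.getLast?_eq_getLast hdne, Option.mem_some_iff] at hy
      have hxv : x = g i := by
        rw [← hx, List.getLast_eq_getElem, List.getElem_take,
          hgel (by omega : i < N)]
        congr 1
        simp; omega
      have hyv : y = b := by
        rw [← hy, List.getLast_eq_getElem, List.getElem_drop, hb, List.getLast_eq_getElem]
        congr 1
        simp [hN]; omega
      rw [hxv, hyv]; exact hTadj
    · intro hmne
      have hlast : m.getLast hmne = g (i + 1) := by
        have h1 : m.getLast? = some (g (i + 1)) := by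
          show (l.take (i + 1) ++ (l.drop (i + 1)).reverse).getLast? = _
          rw [List.getLast?_append, List.getLast?_reverse, List.head?_drop,
            List.getElem?_eq_getElem (by omega : i + 1 < l.length), hgel hi1]
          rfl
        rw [List.getLast?_eq_getLast hmne, Option.some_inj] at h1
        exact h1
      have hhead : m.head hmne = a := by
        have h1 : m.head? = some a := by
          show (l.take (i + 1) ++ (l.drop (i + 1)).reverse).head? = _
          rw [List.head?_append]
          have h2 : (l.take (i + 1)).head? = some a := by
            rw [List.head?_eq_getElem?, List.getElem?_eq_getElem
              (by simp; omega : 0 < (l.take (i+1)).length), List.getElem_take,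
              ← hgel (by omega : 0 < N), hg0]
          rw [h2]; rfl
        rw [List.head?_eq_head hmne, Option.some_inj] at h1
        exact h1
      rw [hlast, hhead]
      exact hSadj.symm
  have hsub : S ∪ T ⊆ Finset.range (N - 1) := by
    rw [hS, hT]
    exact Finset.union_subset (Finset.filter_subset _ _) (Finset.filter_subset _ _)
  have := Finset.card_le_card hsub
  rw [Finset.card_union_of_disjoint hdisj, Finset.card_range] at this
  rw [← hScard, ← hTcard, ← hNcard]
  omega

lemma exists_path_list {H : SimpleGraph V} {x y : V} (hxy : x ≠ y) (hnadj : ¬H.Adj x y)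
    (h3 : 3 ≤ Fintype.card V) (hnH : ∀ m : List V, ¬IsHC H m)
    (hH2 : ∃ l, IsHC (H ⊔ fromEdgeSet {s(x, y)}) l) :
    ∃ (l : List V) (hne : l ≠ []), l.Nodup ∧ (∀ v, v ∈ l) ∧ l.Chain' H.Adj ∧
      ((l.head hne = x ∧ l.getLast hne = y) ∨ (l.head hne = y ∧ l.getLast hne = x)) := by
  classical
  set H' := H ⊔ fromEdgeSet {s(x, y)} with hH'
  have key : ∀ u w : V, H'.Adj u w → ¬(u = x ∧ w = y) → ¬(u = y ∧ w = x) → H.Adj u w := by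
    intro u w huw h1 h2
    rw [hH', SimpleGraph.sup_adj, SimpleGraph.fromEdgeSet_adj] at huw
    rcases huw with h | ⟨hm, hne⟩
    · exact h
    · rw [Set.mem_singleton_iff, Sym2.eq_iff] at hm
      tauto
  obtain ⟨l₀, hl₀⟩ := hH2
  -- rotate so that x is first
  have hxl₀ : x ∈ l₀ := hl₀.2.1 x
  have hidx : l₀.idxOf x < l₀.length := List.idxOf_lt_length_iff.mpr hxl₀
  set l : List V := l₀.rotate (l₀.idxOf x) with hldef
  have hIH := isHC_rotate hl₀ (l₀.idxOf x)
  rw [← hldef] at hIH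
  clear_value l
  obtain ⟨hnd, hmem, hch, hwrap⟩ := hIH
  have hlen : l.length = Fintype.card V := by
    have hlu : l.toFinset = Finset.univ := by ext v; simp [hmem]
    rw [← List.toFinset_card_of_nodup hnd, hlu, Finset.card_univ]
  have hne : l ≠ [] := by intro h; rw [h] at hlen; simp at hlen; omega
  have hN3 : 3 ≤ l.length := by omega
  have hheadx : l.head hne = x := by
    have h1 : l.head? = some x := by
      rw [hldef, List.head?_rotate hidx, List.getElem?_eq_getElem hidx,
        List.getElem_idxOf hidx]
    rw [List.head?_eq_head hne, Option.some_inj] at h1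
    exact h1
  have hx0 : l[0]'(by omega) = x := by rw [← List.head_eq_getElem_zero hne, hheadx]
  set b := l.getLast hne with hbdef
  have hbel : l[l.length - 1]'(by omega) = b := (List.getLast_eq_getElem hne).symm
  have hinj : ∀ {i j : ℕ} (hi : i < l.length) (hj : j < l.length),
      l[i]'hi = l[j]'hj → i = j := fun hi hj hij => (hnd.getElem_inj_iff).mp hij
  have hchel : ∀ (i : ℕ) (h : i + 1 < l.length),
      H'.Adj (l[i]'(by omega)) (l[i+1]'h) := by
    intro i h
    have := List.isChain_iff_getElem.mp hch i (by omega)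
    simpa using this
  have hl1 : 1 < l.length := by omega
  by_cases hcb : b = y
  · -- l itself works, ends x, y
    refine ⟨l, hne, hnd, hmem, ?_, Or.inl ⟨hheadx, by rw [← hbdef, hcb]⟩⟩
    show List.IsChain _ _; rw [List.isChain_iff_getElem]
    intro i hilt
    have h1 : i + 1 < l.length := by omega
    apply key _ _ (hchel i h1)
    · rintro ⟨hux, hwy⟩
      have hi0 : i = 0 := hinj _ _ (hux.trans hx0.symm)
      subst hi0
      have : (1 : ℕ) = l.length - 1 := hinj _ _ (by rw [hwy, ← hcb, ← hbel])
      omega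
    · rintro ⟨-, hwx⟩
      have : i + 1 = 0 := hinj _ _ (by rw [hwx, ← hx0])
      omega
  · by_cases hc1 : l[1]'hl1 = y
    · -- rotate by one more; ends y, x
      refine ⟨l.rotate 1, ?_, ?_, ?_, ?_, ?_⟩
      · intro h
        have := congrArg List.length h
        rw [List.length_rotate, List.length_nil] at this
        omega
      · rwa [List.nodup_rotate]
      · intro v; rw [List.mem_rotate]; exact hmem v
      · -- chain in H
        obtain ⟨hnd', hmem', hch', hwrap'⟩ := isHC_rotate ⟨hnd, hmem, hch, hwrap⟩ 1
        have hlr : (l.rotate 1).length = l.length := List.length_rotate l 1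
        have hget : ∀ (i : ℕ) (h : i < l.length), (l.rotate 1)[i]'(by omega) =
            l[(i + 1) % l.length]'(Nat.mod_lt _ (by omega)) := by
          intro i h
          rw [List.getElem_rotate]
        show List.IsChain _ _; rw [List.isChain_iff_getElem]
        intro i hilt
        rw [hlr] at hilt
        have h1 : i + 1 < l.length := by omega
        have hadj' := List.isChain_iff_getElem.mp hch' i (by rw [hlr]; omega)
        apply key _ _ hadj'
        · rintro ⟨hux, -⟩
          rw [hget i (by omega)] at hux
          have := hinj _ _ (hux.trans hx0.symm)
          have h2 : (i + 1) % l.length = i + 1 := Nat.mod_eq_of_lt (by omega)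
          omega
        · rintro ⟨huy, hwx⟩
          rw [hget (i+1) h1] at hwx
          rw [hget i (by omega)] at huy
          have e2 := hinj _ _ (huy.trans hc1.symm)
          have h2 : (i + 1) % l.length = i + 1 := Nat.mod_eq_of_lt (by omega)
          rcases Nat.lt_or_ge (i + 1 + 1) l.length with hlt | hge
          · simp only [Nat.mod_eq_of_lt hlt] at hwx
            have e1 := hinj _ _ (hwx.trans hx0.symm)
            omega
          · have hEq : i + 1 + 1 = l.length := by omega
            simp only [hEq, Nat.mod_self] at hwx
            have e1 := hinj _ _ (hwx.trans hx0.symm)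
            omega
      · -- ends: head = y, last = x
        have hner : l.rotate 1 ≠ [] := by
          intro h
          have := congrArg List.length h
          rw [List.length_rotate, List.length_nil] at this
          omega
        refine Or.inr ⟨?_, ?_⟩
        · have h1 : (l.rotate 1).head? = some y := by
            rw [List.head?_rotate (by omega : 1 < l.length),
              List.getElem?_eq_getElem hl1, hc1]
          rw [List.head?_eq_head hner, Option.some_inj] at h1
          exact h1
        · rw [List.getLast_eq_getElem]
          have hlr : (l.rotate 1).length = l.length := List.length_rotate l 1
          rw [List.getElem_rotate]
          have hlr : (l.rotate 1).length = l.length := List.length_rotate l 1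
          rw [← hx0]
          congr 1
          rw [hlr, (by omega : l.length - 1 + 1 = l.length), Nat.mod_self]
    · -- no neighbor of x in the cycle is y: contradiction, H has a ham cycle
      exfalso
      apply hnH l
      refine ⟨hnd, hmem, ?_, ?_⟩
      · show List.IsChain _ _; rw [List.isChain_iff_getElem]
        intro i hilt
        have h1 : i + 1 < l.length := by omega
        apply key _ _ (hchel i h1)
        · rintro ⟨hux, hwy⟩
          have hi0 : i = 0 := hinj _ _ (hux.trans hx0.symm)
          subst hi0
          exact hc1 hwy
        · rintro ⟨-, hwx⟩
          have : i + 1 = 0 := hinj _ _ (by rw [hwx, ← hx0])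
          omega
      · intro h
        apply key _ _ (hwrap h)
        · rintro ⟨hbx, hhy⟩
          rw [hheadx] at hhy
          exact hxy hhy
        · rintro ⟨hby, -⟩
          exact hcb hby

end PosaAux

open PosaAux in
theorem posa_hamiltonian_cycle {V : Type*} [Fintype V] [DecidableEq V] (G : SimpleGraph V)
    [DecidableRel G.Adj] (n : ℕ) (hn : Fintype.card V = n) (h3 : 3 ≤ n)
    (h : ∀ k : ℕ, 1 ≤ k → 2 * k ≤ n - 1 →
      (Finset.univ.filter fun v => G.degree v ≤ k).card < k) :
    G.IsHamiltonian := by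
  classical
  subst hn
  by_contra hG
  -- maximal non-hamiltonian supergraph
  have hGS : G ∈ {H : SimpleGraph V | G ≤ H ∧ ¬ HamP H} :=
    ⟨le_refl G, fun hp => hG (hamP_isHamiltonian h3 hp)⟩
  obtain ⟨H, hHS, hmax⟩ := Set.Finite.exists_maximalFor id
    {H : SimpleGraph V | G ≤ H ∧ ¬ HamP H} (Set.toFinite _) ⟨G, hGS⟩
  obtain ⟨hGH, hHnc⟩ := hHS
  have hHnc' : ∀ m : List V, ¬ IsHC H m := fun m hm => hHnc ⟨m, hm⟩
  have hdegmono : ∀ v : V, G.degree v ≤ H.degree v := by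
    intro v
    apply Finset.card_le_card
    intro w hw
    rw [SimpleGraph.mem_neighborFinset] at hw ⊢
    exact hGH hw
  -- a nonadjacent pair exists
  have hpairex : ∃ q : V × V, q.1 ≠ q.2 ∧ ¬H.Adj q.1 q.2 := by
    by_contra hc
    push_neg at hc
    apply hHnc
    refine ⟨Finset.univ.toList, Finset.nodup_toList _, fun v => by simp, ?_, ?_⟩
    · exact List.Pairwise.isChain (by
        exact (Finset.nodup_toList _).imp (fun {a b} hab => hc (a, b) hab))
    · intro hne
      set L : List V := (Finset.univ : Finset V).toList with hL
      refine hc (L.getLast hne, L.head hne) ?_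
      intro hEq
      have hlp : 0 < L.length := List.length_pos_of_ne_nil hne
      have h1 : L.getLast hne = L[L.length - 1]'(by omega) := List.getLast_eq_getElem hne
      have h2 : L.head hne = L[0]'hlp := List.head_eq_getElem_zero hne
      have hlen : L.length = Fintype.card V := by
        rw [hL, Finset.length_toList, Finset.card_univ]
      have hLnd : L.Nodup := by rw [hL]; exact Finset.nodup_toList _
      rw [h1, h2] at hEq
      have := (hLnd.getElem_inj_iff).mp hEq
      omega
  obtain ⟨q0, hq0⟩ := hpairex
  obtain ⟨p, hpP, hpmax⟩ := Finset.exists_max_image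
    (Finset.univ.filter (fun q : V × V => q.1 ≠ q.2 ∧ ¬H.Adj q.1 q.2))
    (fun q => H.degree q.1 + H.degree q.2)
    ⟨q0, Finset.mem_filter.mpr ⟨Finset.mem_univ _, hq0⟩⟩
  rw [Finset.mem_filter] at hpP
  obtain ⟨-, hxy, hnadj⟩ := hpP
  set x := p.1
  set y := p.2
  have hpmax' : ∀ u w : V, u ≠ w → ¬H.Adj u w →
      H.degree u + H.degree w ≤ H.degree x + H.degree y := by
    intro u w h1 h2
    exact hpmax (u, w) (Finset.mem_filter.mpr ⟨Finset.mem_univ _, h1, h2⟩)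
  -- adding the edge creates a hamiltonian cycle
  have hH2 : HamP (H ⊔ fromEdgeSet {s(x, y)}) := by
    by_contra hc
    have hle : H ≤ H ⊔ fromEdgeSet {s(x, y)} := le_sup_left
    have hmem2 : (H ⊔ fromEdgeSet {s(x, y)}) ∈ {H : SimpleGraph V | G ≤ H ∧ ¬ HamP H} :=
      ⟨hGH.trans hle, hc⟩
    have hEq : id H = id (H ⊔ fromEdgeSet {s(x, y)}) := le_antisymm hle (hmax hmem2 hle)
    simp only [id] at hEq
    have hadj2 : (H ⊔ fromEdgeSet {s(x, y)}).Adj x y := by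
      rw [SimpleGraph.sup_adj, SimpleGraph.fromEdgeSet_adj]
      exact Or.inr ⟨Set.mem_singleton _, hxy⟩
    rw [← hEq] at hadj2
    exact hnadj hadj2
  -- extract a hamiltonian path from x to y (or y to x)
  obtain ⟨l, hne, hnd, hmem, hch, hends⟩ := exists_path_list hxy hnadj h3 hHnc' hH2
  have hnadj' : ¬ H.Adj (l.head hne) (l.getLast hne) := by
    rcases hends with ⟨h1, h2⟩ | ⟨h1, h2⟩ <;> rw [h1, h2]
    · exact hnadj
    · exact fun hadj => hnadj hadj.symm
  have hsum0 := deg_sum_le hne hnd hmem hch h3 hnadj' hHnc'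
  have hsum : H.degree x + H.degree y ≤ Fintype.card V - 1 := by
    rcases hends with ⟨h1, h2⟩ | ⟨h1, h2⟩ <;> rw [h1, h2] at hsum0 <;> omega
  -- wlog: a has the smaller degree
  obtain ⟨a, b, hdab, hsumab, hmaxab⟩ :
      ∃ a b : V, H.degree a ≤ H.degree b ∧
        H.degree a + H.degree b ≤ Fintype.card V - 1 ∧
        (∀ w : V, w ≠ b → ¬H.Adj w b → H.degree w ≤ H.degree a) := by
    rcases le_total (H.degree x) (H.degree y) with hle | hle
    · refine ⟨x, y, hle, hsum, fun w h1 h2 => ?_⟩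
      have := hpmax' w y h1 h2
      omega
    · refine ⟨y, x, hle, by omega, fun w h1 h2 => ?_⟩
      have := hpmax' w x h1 h2
      omega
  set k := H.degree a with hk
  -- k ≥ 1
  have hk1 : 1 ≤ k := by
    have hh1 := h 1 le_rfl (by omega)
    have : ¬ G.degree a ≤ 1 := by
      intro hdeg
      have : a ∈ Finset.univ.filter (fun v => G.degree v ≤ 1) :=
        Finset.mem_filter.mpr ⟨Finset.mem_univ _, hdeg⟩
      have := Finset.card_pos.mpr ⟨a, this⟩
      omega
    have := hdegmono a
    omega
  have hk2 : 2 * k ≤ Fintype.card V - 1 := by omega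
  -- the set of low degree vertices
  have hWcard : (Finset.univ.filter (fun w : V => w ≠ b ∧ ¬H.Adj w b)).card
      + (H.degree b + 1) = Fintype.card V := by
    have hcompl : Finset.univ.filter (fun w : V => ¬(w ≠ b ∧ ¬H.Adj w b))
        = insert b (H.neighborFinset b) := by
      ext w
      simp only [Finset.mem_filter, Finset.mem_univ, true_and, Finset.mem_insert,
        SimpleGraph.mem_neighborFinset, not_and, not_not, ne_eq]
      constructor
      · intro hw
        by_cases hwb : w = b
        · exact Or.inl hwb
        · exact Or.inr (hw hwb).symm
      · rintro (rfl | hadj)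
        · intro hq; exact absurd rfl hq
        · intro _; exact hadj.symm
    have hbn : b ∉ H.neighborFinset b := by
      rw [SimpleGraph.mem_neighborFinset]; exact H.irrefl
    have hsplit := Finset.card_filter_add_card_filter_not
      (s := (Finset.univ : Finset V)) (p := fun w : V => w ≠ b ∧ ¬H.Adj w b)
    rw [hcompl, Finset.card_insert_of_notMem hbn,
      SimpleGraph.card_neighborFinset_eq_degree, Finset.card_univ] at hsplit
    exact hsplit
  have hWk : k ≤ (Finset.univ.filter (fun w : V => w ≠ b ∧ ¬H.Adj w b)).card := by omega
  have hWsub : (Finset.univ.filter (fun w : V => w ≠ b ∧ ¬H.Adj w b)) ⊆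
      Finset.univ.filter (fun v => G.degree v ≤ k) := by
    intro w hw
    rw [Finset.mem_filter] at hw ⊢
    refine ⟨Finset.mem_univ _, ?_⟩
    have h1 := hmaxab w hw.2.1 hw.2.2
    have h2 := hdegmono w
    omega
  have hcard := Finset.card_le_card hWsub
  have hfin := h k hk1 hk2
  omega
end

section
/- Let G be a simple graph on n vertices. If for every integer k with 0 ≤ k ≤ (n−2)/2 the number of vertices of degree at most k is at most k, then G has a hamilton path. -/
open SimpleGraph Finset

namespace PosaProof

open SimpleGraph.Walk

variable {W : Type*} [DecidableEq W] {H : SimpleGraph W}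

lemma loop_path_eq_nil {x : W} {r : H.Walk x x} (h : r.IsPath) : r = Walk.nil := by
  cases r with
  | nil => rfl
  | cons h' s =>
    rw [Walk.cons_isPath_iff] at h
    exact absurd s.end_mem_support h.2

lemma decomp_of_edge_start {a b c : W} {p : H.Walk a b} (hp : p.IsPath)
    (h : s(a, c) ∈ p.edges) : ∃ (ha : H.Adj a c) (r : H.Walk c b), p = Walk.cons ha r := by
  cases p with
  | nil => simp at h
  | cons h' r =>
    rename_i x
    rw [Walk.edges_cons, List.mem_cons] at h
    rcases h with h | h
    · rw [Sym2.eq_iff] at h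
      rcases h with ⟨-, rfl⟩ | ⟨h1, h2⟩
      · exact ⟨h', r, rfl⟩
      · exact absurd h1.symm h'.ne'
    · exfalso
      rw [Walk.cons_isPath_iff] at hp
      exact hp.2 (Walk.fst_mem_support_of_mem_edges r h)

lemma exists_decomp_of_mem_darts {u v : W} {p : H.Walk u v} {d : H.Dart} (hd : d ∈ p.darts) :
    ∃ (q : H.Walk u d.fst) (r : H.Walk d.snd v), p = q.append (Walk.cons d.adj r) := by
  induction p with
  | nil => simp at hd
  | cons h' r ih =>
    rw [Walk.darts_cons, List.mem_cons] at hd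
    rcases hd with rfl | hd
    · exact ⟨Walk.nil, r, rfl⟩
    · obtain ⟨q, r', heq⟩ := ih hd
      exact ⟨Walk.cons h' q, r', by rw [Walk.cons_append, heq]⟩

lemma isCycle_of_tail_nodup {u : W} {c : H.Walk u u} (h3 : 3 ≤ c.length)
    (hnd : c.support.tail.Nodup) : c.IsCycle := by
  cases c with
  | nil => simp at h3
  | cons hadj q =>
    rename_i x
    rw [Walk.support_cons, List.tail_cons] at hnd
    have hq : q.IsPath := Walk.IsPath.mk' hnd
    rw [Walk.cons_isCycle_iff]
    refine ⟨hq, fun he => ?_⟩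
    have he' : s(u, x) ∈ q.reverse.edges := by
      rwa [Walk.edges_reverse, List.mem_reverse]
    obtain ⟨ha', r, hr⟩ := decomp_of_edge_start hq.reverse he'
    have hrp : r.IsPath := by
      have h := hq.reverse
      rw [hr, Walk.cons_isPath_iff] at h
      exact h.1
    have hrn : r = Walk.nil := loop_path_eq_nil hrp
    have hlen : q.length = 1 := by
      have h := congrArg Walk.length hr
      rw [Walk.length_reverse, hrn, Walk.length_cons, Walk.length_nil] at h
      exact h
    rw [Walk.length_cons, hlen] at h3
    omega

lemma isHamCycle_of_counts {u : W} {c : H.Walk u u}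
    (hlen : 3 ≤ c.length) (hcount : ∀ z : W, c.support.tail.count z = 1) :
    c.IsHamiltonianCycle := by
  have hnd : c.support.tail.Nodup :=
    List.nodup_iff_count_le_one.mpr (fun z => le_of_eq (hcount z))
  rw [Walk.isHamiltonianCycle_iff_isCycle_and_support_count_tail_eq_one]
  exact ⟨isCycle_of_tail_nodup hlen hnd, hcount⟩

lemma cycle_of_crossing [Fintype W] {a b : W} {p : H.Walk a b} (hp : p.IsHamiltonian)
    (h3 : 3 ≤ Fintype.card W) {d : H.Dart} (hd : d ∈ p.darts)
    (h1 : H.Adj a d.snd) (h2 : H.Adj b d.fst) :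
    ∃ (w : W) (c : H.Walk w w), c.IsHamiltonianCycle := by
  obtain ⟨q, r, rfl⟩ := exists_decomp_of_mem_darts hd
  have hps : ∀ z, (q.support ++ r.support).count z = 1 := by
    intro z
    have h := hp z
    rwa [Walk.support_append, Walk.support_cons, List.tail_cons] at h
  have hplen : q.length + (r.length + 1) = Fintype.card W - 1 := by
    have h := hp.length_eq
    rwa [Walk.length_append, Walk.length_cons] at h
  refine ⟨a, q.append (Walk.cons h2.symm (r.reverse.append (Walk.cons h1.symm Walk.nil))), ?_⟩
  have hsup : (q.append (Walk.cons h2.symm (r.reverse.append (Walk.cons h1.symm Walk.nil)))).support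
      = q.support ++ (r.support.reverse ++ [a]) := by
    rw [Walk.support_append, Walk.support_cons, List.tail_cons, Walk.support_append,
      Walk.support_reverse, Walk.support_cons, Walk.support_nil, List.tail_cons]
  apply isHamCycle_of_counts
  · rw [Walk.length_append, Walk.length_cons, Walk.length_append, Walk.length_reverse,
      Walk.length_cons, Walk.length_nil]
    omega
  · intro z
    have h1z := hps z
    have hqc : q.support = a :: q.support.tail := q.support_eq_cons
    have htl : (q.append (Walk.cons h2.symm (r.reverse.append
        (Walk.cons h1.symm Walk.nil)))).support.tail
        = q.support.tail ++ (r.support.reverse ++ [a]) := by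
      rw [hsup]
      conv_lhs => rw [hqc]
      rw [List.cons_append, List.tail_cons]
    rw [htl, List.count_append, List.count_append, List.count_reverse]
    by_cases hz : z = a
    · subst hz
      rw [hqc, List.cons_append, List.count_cons_self, List.count_append] at h1z
      have hsing : List.count z [z] = 1 := by simp
      omega
    · rw [hqc, List.cons_append, List.count_cons_of_ne (Ne.symm hz), List.count_append] at h1z
      have hsing : List.count z [a] = 0 := List.count_eq_zero.mpr (by simpa using hz)
      omega

lemma no_crossing_degree_bound [Fintype W] [DecidableRel H.Adj] {a b : W} {p : H.Walk a b}
    (hp : p.IsHamiltonian)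
    (hnc : ∀ d ∈ p.darts, ¬(H.Adj a d.snd ∧ H.Adj b d.fst)) :
    H.degree a + H.degree b + 1 ≤ Fintype.card W := by
  classical
  have hnodup : p.support.Nodup := hp.isPath.support_nodup
  have hfst : (p.darts.map (·.fst)).Nodup := by
    rw [Walk.map_fst_darts]
    exact hnodup.sublist (List.dropLast_sublist _)
  have hbsup : p.support.dropLast ++ [b] = p.support := by
    conv_rhs => rw [← List.dropLast_append_getLast (Walk.support_ne_nil p)]
    rw [Walk.getLast_support]
  have hbnot : b ∉ p.support.dropLast := by
    have h := hnodup
    rw [← hbsup, List.nodup_append] at h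
    intro hmem
    exact h.2.2 b hmem b (List.mem_singleton_self b) rfl
  have hchoice : ∀ y ∈ H.neighborFinset a, ∃ dt ∈ p.darts, dt.snd = y := by
    intro y hy
    rw [mem_neighborFinset] at hy
    have hymem : y ∈ p.support.tail := by
      have hm : y ∈ p.support := hp.mem_support y
      rw [Walk.support_eq_cons, List.mem_cons] at hm
      rcases hm with rfl | hm
      · exact absurd rfl hy.ne'
      · exact hm
    rw [← Walk.map_snd_darts, List.mem_map] at hymem
    obtain ⟨dt, hdt, hh⟩ := hymem
    exact ⟨dt, hdt, hh⟩
  choose f hf1 hf2 using hchoice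
  set F : W → W := fun y => if h : y ∈ H.neighborFinset a then (f y h).fst else y with hF
  have hmaps : ∀ y ∈ H.neighborFinset a, F y ∈ univ \ insert b (H.neighborFinset b) := by
    intro y hy
    rw [mem_sdiff, mem_insert]
    refine ⟨mem_univ _, fun hmem => ?_⟩
    have hFy : F y = (f y hy).fst := by rw [hF]; simp [hy]
    rcases hmem with hb | hnb
    · rw [hFy] at hb
      have hmm2 : (f y hy).fst ∈ p.darts.map (·.fst) := List.mem_map_of_mem (hf1 y hy)
      rw [hb, Walk.map_fst_darts] at hmm2
      exact hbnot hmm2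
    · rw [hFy, mem_neighborFinset] at hnb
      apply hnc (f y hy) (hf1 y hy)
      constructor
      · rw [hf2 y hy, ← mem_neighborFinset]; exact hy
      · exact hnb
  have hinj : Set.InjOn F (H.neighborFinset a) := by
    intro y1 hy1 y2 hy2 heq
    rw [Finset.mem_coe] at hy1 hy2
    have hFy1 : F y1 = (f y1 hy1).fst := by rw [hF]; simp [hy1]
    have hFy2 : F y2 = (f y2 hy2).fst := by rw [hF]; simp [hy2]
    rw [hFy1, hFy2] at heq
    have hdd : f y1 hy1 = f y2 hy2 :=
      List.inj_on_of_nodup_map hfst (hf1 y1 hy1) (hf1 y2 hy2) heq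
    rw [← hf2 y1 hy1, ← hf2 y2 hy2, hdd]
  have hcard := Finset.card_le_card_of_injOn F hmaps hinj
  have hc1 : (univ \ insert b (H.neighborFinset b)).card
      = Fintype.card W - (H.degree b + 1) := by
    rw [Finset.card_sdiff_of_subset (Finset.subset_univ _), Finset.card_insert_of_notMem
      (H.notMem_neighborFinset_self b), Finset.card_univ]
    rfl
  have hc2 : (insert b (H.neighborFinset b)).card ≤ Fintype.card W := by
    rw [← Finset.card_univ]
    exact Finset.card_le_card (Finset.subset_univ _)
  rw [Finset.card_insert_of_notMem (H.notMem_neighborFinset_self b)] at hc2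
  rw [hc1] at hcard
  have hda : H.degree a = (H.neighborFinset a).card := rfl
  have hdb : H.degree b = (H.neighborFinset b).card := rfl
  omega

lemma counting_contradiction [Fintype W] [DecidableRel H.Adj] {a b : W}
    (hmin : ∀ v, 0 < H.degree v)
    (hcond : ∀ k, 1 ≤ k → 2 * k ≤ Fintype.card W - 1 →
        (univ.filter fun v => H.degree v ≤ k).card < k)
    (hsum : H.degree a + H.degree b + 1 ≤ Fintype.card W)
    (hab : H.degree a ≤ H.degree b)
    (hmax : ∀ x y : W, x ≠ y → ¬H.Adj x y → H.degree x + H.degree y ≤ H.degree a + H.degree b) :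
    False := by
  have hT : (univ \ insert b (H.neighborFinset b))
      ⊆ univ.filter (fun v => H.degree v ≤ H.degree a) := by
    intro z hz
    rw [mem_sdiff, mem_insert] at hz
    push_neg at hz
    obtain ⟨-, hzb, hznb⟩ := hz
    rw [mem_neighborFinset] at hznb
    rw [mem_filter]
    refine ⟨mem_univ _, ?_⟩
    have h := hmax z b hzb (fun hadj => hznb hadj.symm)
    omega
  have hTcard : Fintype.card W - (H.degree b + 1)
      ≤ (univ.filter fun v => H.degree v ≤ H.degree a).card := by
    calc Fintype.card W - (H.degree b + 1)
        = (univ \ insert b (H.neighborFinset b)).card := by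
          rw [Finset.card_sdiff_of_subset (Finset.subset_univ _), Finset.card_insert_of_notMem
            (H.notMem_neighborFinset_self b), Finset.card_univ]
          rfl
      _ ≤ _ := Finset.card_le_card hT
  have hlt := hcond (H.degree a) (hmin a) (by omega)
  omega

lemma final_step [Fintype W] [DecidableRel H.Adj] {a b : W} (p : H.Walk a b)
    (hp : p.IsHamiltonian) (hnadj : ¬H.Adj a b)
    (h3 : 3 ≤ Fintype.card W) (hmin : ∀ v, 0 < H.degree v)
    (hcond : ∀ k, 1 ≤ k → 2 * k ≤ Fintype.card W - 1 →
        (univ.filter fun v => H.degree v ≤ k).card < k)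
    (hmax : ∀ x y : W, x ≠ y → ¬H.Adj x y → H.degree x + H.degree y ≤ H.degree a + H.degree b) :
    ∃ (w : W) (c : H.Walk w w), c.IsHamiltonianCycle := by
  classical
  by_cases hcross : ∃ d ∈ p.darts, H.Adj a d.snd ∧ H.Adj b d.fst
  · obtain ⟨d, hd, h1, h2⟩ := hcross
    exact cycle_of_crossing hp h3 hd h1 h2
  · exfalso
    have hnc : ∀ d ∈ p.darts, ¬(H.Adj a d.snd ∧ H.Adj b d.fst) := by
      intro d hd hcon
      exact hcross ⟨d, hd, hcon⟩
    have hsum := no_crossing_degree_bound hp hnc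
    rcases le_total (H.degree a) (H.degree b) with hle | hle
    · exact counting_contradiction hmin hcond hsum hle hmax
    · refine counting_contradiction (a := b) (b := a) hmin hcond (by omega) hle ?_
      intro x y hxy hn
      have h := hmax x y hxy hn
      omega

lemma exists_path_support_eq (hcomp : ∀ x y : W, x ≠ y → H.Adj x y) :
    ∀ l : List W, l.Nodup → l ≠ [] → ∃ (s t : W) (p : H.Walk s t), p.support = l := by
  intro l
  induction l with
  | nil => intro _ h; exact absurd rfl h
  | cons x l ih =>
    intro hnd _
    rcases eq_or_ne l [] with rfl | hne
    · exact ⟨x, x, Walk.nil, rfl⟩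
    · obtain ⟨s, t, p, hsup⟩ := ih (List.nodup_cons.mp hnd).2 hne
      have hs : s ∈ l := by rw [← hsup]; exact p.start_mem_support
      have hxs : x ≠ s := fun h => (List.nodup_cons.mp hnd).1 (h ▸ hs)
      exact ⟨x, t, Walk.cons (hcomp x s hxs) p, by rw [Walk.support_cons, hsup]⟩

lemma complete_hamCycle [Fintype W]
    (h3 : 3 ≤ Fintype.card W) (hcomp : ∀ x y : W, x ≠ y → H.Adj x y) :
    ∃ (w : W) (c : H.Walk w w), c.IsHamiltonianCycle := by
  have hltl : (univ : Finset W).toList.length = Fintype.card W := by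
    rw [Finset.length_toList, Finset.card_univ]
  obtain ⟨s, t, p, hsup⟩ := exists_path_support_eq hcomp (univ : Finset W).toList
    (Finset.nodup_toList _) (by
      intro h
      rw [h] at hltl
      simp at hltl
      omega)
  have hphm : p.IsHamiltonian := by
    intro z
    rw [hsup]
    exact List.count_eq_one_of_mem (Finset.nodup_toList _) (Finset.mem_toList.mpr (mem_univ z))
  have hst : s ≠ t := by
    intro h
    subst h
    have hnil := loop_path_eq_nil hphm.isPath
    rw [hnil] at hsup
    have := congrArg List.length hsup
    rw [Walk.support_nil, hltl] at this
    simp at this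
    omega
  have hplen : p.length = Fintype.card W - 1 := hphm.length_eq
  refine ⟨s, p.append (Walk.cons (hcomp t s hst.symm) Walk.nil), ?_⟩
  apply isHamCycle_of_counts
  · rw [Walk.length_append, Walk.length_cons, Walk.length_nil]
    omega
  · intro z
    have h1z := hphm z
    have hqc : p.support = s :: p.support.tail := p.support_eq_cons
    have htl : (p.append (Walk.cons (hcomp t s hst.symm) Walk.nil)).support.tail
        = p.support.tail ++ [s] := by
      rw [Walk.support_append, Walk.support_cons, Walk.support_nil, List.tail_cons]
      conv_lhs => rw [hqc]
      rw [List.cons_append, List.tail_cons]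
    rw [htl, List.count_append]
    by_cases hz : z = s
    · subst hz
      rw [hqc, List.count_cons_self] at h1z
      have hsing : List.count z [z] = 1 := by simp
      omega
    · rw [hqc, List.count_cons_of_ne (Ne.symm hz)] at h1z
      have hsing : List.count z [s] = 0 := List.count_eq_zero.mpr (by simpa using hz)
      omega

lemma hamCycle_rotate {K : SimpleGraph W} {a x : W} {c : K.Walk a a}
    (hc : c.IsHamiltonianCycle) (hx : x ∈ c.support) : (c.rotate x hx).IsHamiltonianCycle := by
  rw [Walk.isHamiltonianCycle_iff_isCycle_and_support_count_tail_eq_one] at hc ⊢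
  refine ⟨hc.1.rotate hx, fun z => ?_⟩
  rw [(Walk.support_rotate c x hx).perm.count_eq]
  exact hc.2 z

lemma ham_path_of_cycle_edge {K : SimpleGraph W} {u v : W} (huv : u ≠ v)
    {c : K.Walk u u} (hc : c.IsHamiltonianCycle) (he : s(u, v) ∈ c.edges) :
    ∃ p : K.Walk v u, p.IsHamiltonian ∧ s(u, v) ∉ p.edges := by
  cases c with
  | nil => simp at he
  | cons hadj q =>
    rename_i x
    have hcyc := hc.isCycle
    rw [Walk.cons_isCycle_iff] at hcyc
    obtain ⟨hqpath, hux⟩ := hcyc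
    have hqham : ∀ z, q.support.count z = 1 := by
      intro z
      have h1 := hc.isHamiltonian_tail z
      rwa [Walk.support_tail_of_not_nil _ hc.isCycle.not_nil, Walk.support_cons, List.tail_cons] at h1
    rw [Walk.edges_cons, List.mem_cons] at he
    by_cases hxv : x = v
    · subst hxv
      exact ⟨q, hqham, hux⟩
    · have he2 : s(u, v) ∈ q.edges := by
        rcases he with h | h
        · exfalso
          rw [Sym2.eq_iff] at h
          rcases h with ⟨-, h2⟩ | ⟨h1, h2⟩
          · exact hxv h2.symm
          · exact huv h2.symm
        · exact h
      have he3 : s(u, v) ∈ q.reverse.edges := by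
        rwa [Walk.edges_reverse, List.mem_reverse]
      obtain ⟨ha', r, hr⟩ := decomp_of_edge_start hqpath.reverse he3
      have hqr : ∀ z, q.reverse.support.count z = 1 := fun z => by
        rw [Walk.support_reverse, List.count_reverse]; exact hqham z
      refine ⟨r.append (Walk.cons hadj.symm Walk.nil), ?_, ?_⟩
      · intro z
        have h4 := hqr z
        rw [hr, Walk.support_cons] at h4
        rw [Walk.support_append, Walk.support_cons, Walk.support_nil, List.tail_cons,
          List.count_append]
        by_cases hz : z = u
        · subst hz
          rw [List.count_cons_self] at h4
          have hsing : List.count z [z] = 1 := by simp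
          omega
        · rw [List.count_cons_of_ne (Ne.symm hz)] at h4
          have hsing : List.count z [u] = 0 := List.count_eq_zero.mpr (by simpa using hz)
          omega
      · rw [Walk.edges_append, Walk.edges_cons, Walk.edges_nil]
        intro hmem
        rw [List.mem_append] at hmem
        rcases hmem with hmem | hmem
        · have hnd : q.reverse.edges.Nodup := hqpath.reverse.edges_nodup
          rw [hr, Walk.edges_cons] at hnd
          exact (List.nodup_cons.mp hnd).1 hmem
        · rw [List.mem_singleton, Sym2.eq_iff] at hmem
          rcases hmem with ⟨h1, -⟩ | ⟨-, h2⟩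
          · exact hadj.ne h1
          · exact hxv h2.symm

lemma extract [Fintype W] {H : SimpleGraph W} [DecidableRel H.Adj] {u v : W} (huv : u ≠ v)
    (hnadj : ¬H.Adj u v) {a : W} {c : (H ⊔ edge u v).Walk a a} (hc : c.IsHamiltonianCycle) :
    (∃ (w : W) (c' : H.Walk w w), c'.IsHamiltonianCycle) ∨
      (∃ p : H.Walk v u, p.IsHamiltonian) := by
  classical
  by_cases hall : ∀ e ∈ c.edges, e ∈ H.edgeSet
  · left
    refine ⟨a, c.transfer H hall, ?_⟩
    rw [Walk.isHamiltonianCycle_iff_isCycle_and_support_count_tail_eq_one]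
    refine ⟨hc.isCycle.transfer hall, fun z => ?_⟩
    rw [Walk.support_transfer]
    exact (Walk.isHamiltonianCycle_iff_isCycle_and_support_count_tail_eq_one.mp hc).2 z
  · right
    push_neg at hall
    obtain ⟨e, hec, heH⟩ := hall
    have he : e = s(u, v) := by
      have h2 : e ∈ (H ⊔ edge u v).edgeSet := Walk.edges_subset_edgeSet c hec
      rw [edgeSet_sup] at h2
      rcases h2 with h2 | h2
      · exact absurd h2 heH
      · rwa [edge_edgeSet_of_ne huv, Set.mem_singleton_iff] at h2
    rw [he] at hec
    have hu : u ∈ c.support := Walk.fst_mem_support_of_mem_edges c hec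
    have hc' := hamCycle_rotate hc hu
    have he' : s(u, v) ∈ (c.rotate u hu).edges := by
      rw [(Walk.rotate_edges c u hu).mem_iff]
      exact hec
    obtain ⟨p, hpham, hpnot⟩ := ham_path_of_cycle_edge huv hc' he'
    have hsub : ∀ e ∈ p.edges, e ∈ H.edgeSet := by
      intro e' hep
      have h2 := Walk.edges_subset_edgeSet p hep
      rw [edgeSet_sup] at h2
      rcases h2 with h2 | h2
      · exact h2
      · rw [edge_edgeSet_of_ne huv, Set.mem_singleton_iff] at h2
        rw [h2] at hep
        exact absurd hep hpnot
    refine ⟨p.transfer H hsub, fun z => ?_⟩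
    rw [Walk.support_transfer]
    exact hpham z

lemma posa_cycle [Fintype W] (N : ℕ) :
    ∀ (H : SimpleGraph W) [DecidableRel H.Adj], Hᶜ.edgeFinset.card ≤ N →
      3 ≤ Fintype.card W → (∀ v, 0 < H.degree v) →
      (∀ k, 1 ≤ k → 2 * k ≤ Fintype.card W - 1 →
          (univ.filter fun v => H.degree v ≤ k).card < k) →
      ∃ (w : W) (c : H.Walk w w), c.IsHamiltonianCycle := by
  induction N with
  | zero =>
    intro H hdec hcard h3 _ _
    have hcomp : ∀ x y : W, x ≠ y → H.Adj x y := by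
      intro x y hxy
      by_contra hadj
      have hmem : s(x, y) ∈ Hᶜ.edgeFinset := by
        rw [mem_edgeFinset, SimpleGraph.mem_edgeSet, compl_adj]
        exact ⟨hxy, hadj⟩
      have := Finset.card_pos.mpr ⟨_, hmem⟩
      omega
    exact complete_hamCycle h3 hcomp
  | succ N ih =>
    intro H hdec hcard h3 hmin hcond
    by_cases hcomp : ∀ x y : W, x ≠ y → H.Adj x y
    · exact complete_hamCycle h3 hcomp
    · push_neg at hcomp
      obtain ⟨x0, y0, hxy0, hnadj0⟩ := hcomp
      set S := (univ ×ˢ univ).filter (fun z : W × W => z.1 ≠ z.2 ∧ ¬H.Adj z.1 z.2) with hSdef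
      have hSne : S.Nonempty := ⟨(x0, y0), by
        rw [hSdef, mem_filter]
        exact ⟨Finset.mem_product.mpr ⟨mem_univ _, mem_univ _⟩, hxy0, hnadj0⟩⟩
      obtain ⟨uv, hmemS, hmaxS⟩ :=
        Finset.exists_max_image S (fun z : W × W => H.degree z.1 + H.degree z.2) hSne
      rw [hSdef, mem_filter] at hmemS
      obtain ⟨-, hne, hnadj⟩ := hmemS
      set u := uv.1 with hu
      set v := uv.2 with hv
      have hmax' : ∀ x y : W, x ≠ y → ¬H.Adj x y →
          H.degree x + H.degree y ≤ H.degree u + H.degree v := by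
        intro x y hxy hn
        exact hmaxS (x, y) (by
          rw [hSdef, mem_filter]
          exact ⟨Finset.mem_product.mpr ⟨mem_univ _, mem_univ _⟩, hxy, hn⟩)
      -- the augmented graph
      have hle : H ≤ H ⊔ edge u v := le_sup_left
      have hdle : ∀ x, H.degree x ≤ (H ⊔ edge u v).degree x := by
        intro x
        apply Finset.card_le_card
        intro y hy
        rw [mem_neighborFinset] at hy ⊢
        exact hle hy
      have hcard2 : (H ⊔ edge u v)ᶜ.edgeFinset.card ≤ N := by
        have hss : (H ⊔ edge u v)ᶜ.edgeFinset ⊂ Hᶜ.edgeFinset := by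
          rw [Finset.ssubset_iff_of_subset]
          · refine ⟨s(u, v), ?_, ?_⟩
            · rw [mem_edgeFinset, SimpleGraph.mem_edgeSet, compl_adj]
              exact ⟨hne, hnadj⟩
            · rw [mem_edgeFinset, SimpleGraph.mem_edgeSet, compl_adj]
              push_neg
              intro _
              rw [sup_adj]
              right
              rw [edge_adj]
              exact ⟨Or.inl ⟨rfl, rfl⟩, hne⟩
          · intro e he
            rw [mem_edgeFinset] at he ⊢
            revert he
            refine Sym2.ind (fun x y => ?_) e
            rw [SimpleGraph.mem_edgeSet, SimpleGraph.mem_edgeSet, compl_adj, compl_adj, sup_adj]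
            intro ⟨h1, h2⟩
            exact ⟨h1, fun hh => h2 (Or.inl hh)⟩
        have := Finset.card_lt_card hss
        omega
      have hmin2 : ∀ x, 0 < (H ⊔ edge u v).degree x := fun x => lt_of_lt_of_le (hmin x) (hdle x)
      have hcond2 : ∀ k, 1 ≤ k → 2 * k ≤ Fintype.card W - 1 →
          (univ.filter fun x => (H ⊔ edge u v).degree x ≤ k).card < k := by
        intro k hk1 hk2
        refine lt_of_le_of_lt (Finset.card_le_card ?_) (hcond k hk1 hk2)
        intro x hx
        rw [mem_filter] at hx ⊢
        exact ⟨hx.1, le_trans (hdle x) hx.2⟩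
      obtain ⟨w, c, hc⟩ := ih (H ⊔ edge u v) hcard2 h3 hmin2 hcond2
      rcases extract hne hnadj hc with hcyc | ⟨p, hp⟩
      · exact hcyc
      · refine final_step p hp (fun hadj => hnadj hadj.symm) h3 hmin hcond ?_
        intro x y hxy hn
        have h2 := hmax' x y hxy hn
        omega

end PosaProof

namespace PosaProof

variable {V : Type*}

/-- `G` plus a dominating vertex `none`. -/
def addDom (G : SimpleGraph V) : SimpleGraph (Option V) where
  Adj x y :=
    match x, y with
    | none, none => False
    | none, some _ => True
    | some _, none => True
    | some a, some b => G.Adj a b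
  symm := ⟨by
    rintro (_ | a) (_ | b) h
    · exact h
    · trivial
    · trivial
    · exact G.symm.symm _ _ h⟩
  loopless := ⟨by
    rintro (_ | a) h
    · exact h
    · exact G.loopless.irrefl a h⟩

variable {G : SimpleGraph V}

@[simp] lemma addDom_adj_some_some {a b : V} :
    (addDom G).Adj (some a) (some b) ↔ G.Adj a b := Iff.rfl

@[simp] lemma addDom_adj_none_some {b : V} : (addDom G).Adj none (some b) := trivial

@[simp] lemma addDom_adj_some_none {a : V} : (addDom G).Adj (some a) none := trivial

@[simp] lemma addDom_adj_none_none : ¬(addDom G).Adj none none := fun h => h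

instance [DecidableRel G.Adj] : DecidableRel (addDom G).Adj := fun x y =>
  match x, y with
  | none, none => isFalse (fun h => h)
  | none, some _ => isTrue trivial
  | some _, none => isTrue trivial
  | some a, some b => (inferInstance : Decidable (G.Adj a b))

lemma addDom_neighborFinset_none [Fintype V] [DecidableEq V] [DecidableRel G.Adj] :
    (addDom G).neighborFinset none = univ.map Function.Embedding.some := by
  ext y
  cases y with
  | none =>
    simp [mem_neighborFinset, Function.Embedding.some]
  | some b =>
    simp [mem_neighborFinset, Function.Embedding.some]

lemma addDom_degree_none [Fintype V] [DecidableEq V] [DecidableRel G.Adj] :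
    (addDom G).degree none = Fintype.card V := by
  rw [degree, addDom_neighborFinset_none, Finset.card_map, Finset.card_univ]

lemma addDom_neighborFinset_some [Fintype V] [DecidableEq V] [DecidableRel G.Adj] (v : V) :
    (addDom G).neighborFinset (some v)
      = insert none ((G.neighborFinset v).map Function.Embedding.some) := by
  ext y
  cases y with
  | none =>
    simp [mem_neighborFinset, Function.Embedding.some]
  | some b =>
    simp [mem_neighborFinset, Function.Embedding.some]
  
lemma addDom_degree_some [Fintype V] [DecidableEq V] [DecidableRel G.Adj] (v : V) :
    (addDom G).degree (some v) = G.degree v + 1 := by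
  rw [degree, addDom_neighborFinset_some, Finset.card_insert_of_notMem, Finset.card_map]
  · rfl
  · rw [Finset.mem_map]
    rintro ⟨z, -, hz⟩
    exact absurd hz (by simp [Function.Embedding.some])

lemma walk_down [DecidableEq V] :
    ∀ {x y : Option V} (r : (addDom G).Walk x y), none ∉ r.support →
    ∃ (a b : V), x = some a ∧ y = some b ∧
      ∃ t : G.Walk a b, t.support.map some = r.support := by
  intro x y r
  induction r with
  | nil =>
    rename_i u
    intro h
    rw [SimpleGraph.Walk.support_nil, List.mem_singleton] at h
    cases u with
    | none => exact absurd rfl h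
    | some a => exact ⟨a, a, rfl, rfl, SimpleGraph.Walk.nil, rfl⟩
  | @cons u v w h' r ih =>
    intro h
    rw [SimpleGraph.Walk.support_cons, List.mem_cons] at h
    push_neg at h
    obtain ⟨hx, hr⟩ := h
    obtain ⟨m, b, hm, hb, t, hsup⟩ := ih hr
    subst hm hb
    cases u with
    | none => exact absurd rfl (by exact fun hh => hx hh.symm)
    | some a =>
      exact ⟨a, b, rfl, rfl, SimpleGraph.Walk.cons (show G.Adj a m from h') t,
        by rw [SimpleGraph.Walk.support_cons, List.map_cons, hsup,
          SimpleGraph.Walk.support_cons]⟩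

end PosaProof

open PosaProof SimpleGraph.Walk in
theorem posa_hamiltonian_path {V : Type*} [Fintype V] [DecidableEq V] [Nonempty V]
    (G : SimpleGraph V) [DecidableRel G.Adj] (n : ℕ) (hn : Fintype.card V = n)
    (h : ∀ k : ℕ, 2 * k ≤ n - 2 →
      (Finset.univ.filter fun v => G.degree v ≤ k).card ≤ k) :
    ∃ (u v : V) (p : G.Walk u v), p.IsHamiltonian := by
  subst hn
  by_cases hone : Fintype.card V = 1
  · obtain ⟨x, hx⟩ := Fintype.card_eq_one_iff.mp hone
    refine ⟨x, x, Walk.nil, fun z => ?_⟩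
    rw [Walk.support_nil]
    rw [hx z]
    simp
  · have h2 : 2 ≤ Fintype.card V := by
      have := Fintype.card_pos (α := V)
      omega
    have hcardO : Fintype.card (Option V) = Fintype.card V + 1 := Fintype.card_option
    have hmin : ∀ x : Option V, 0 < (addDom G).degree x := by
      intro x
      cases x with
      | none => rw [addDom_degree_none]; omega
      | some v => rw [addDom_degree_some]; omega
    have hcond : ∀ k, 1 ≤ k → 2 * k ≤ Fintype.card (Option V) - 1 →
        (univ.filter fun x => (addDom G).degree x ≤ k).card < k := by
      intro k hk1 hk2
      rw [hcardO] at hk2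
      have hklt : k < Fintype.card V := by omega
      have hsub : (univ.filter fun x : Option V => (addDom G).degree x ≤ k)
          ⊆ (univ.filter fun v : V => G.degree v ≤ k - 1).map Function.Embedding.some := by
        intro x hx
        rw [mem_filter] at hx
        obtain ⟨-, hdeg⟩ := hx
        cases x with
        | none =>
          rw [addDom_degree_none] at hdeg
          omega
        | some v =>
          rw [addDom_degree_some] at hdeg
          rw [Finset.mem_map]
          refine ⟨v, ?_, rfl⟩
          rw [mem_filter]
          exact ⟨mem_univ _, by omega⟩
      have hcardle := Finset.card_le_card hsub
      rw [Finset.card_map] at hcardle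
      have hh := h (k - 1) (by omega)
      omega
    obtain ⟨w, c, hc⟩ := posa_cycle (W := Option V) ((addDom G)ᶜ.edgeFinset.card)
      (addDom G) le_rfl (by omega) hmin hcond
    have hnone : (none : Option V) ∈ c.support := hc.mem_support _
    have hc2 := hamCycle_rotate hc hnone
    revert hc2
    generalize c.rotate none hnone = c2
    intro hc2
    cases c2 with
    | nil => exact absurd rfl hc2.ne_nil
    | cons hadj q =>
      rename_i x
      have hqpath : q.IsPath := by
        have hcyc := hc2.isCycle
        rw [Walk.cons_isCycle_iff] at hcyc
        exact hcyc.1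
      have hqmem : ∀ w : Option V, w ∈ q.support := by
        intro w
        have hm := hc2.mem_support w
        rw [Walk.support_cons, List.mem_cons] at hm
        rcases hm with rfl | hm
        · exact q.end_mem_support
        · exact hm
      have hqrnil : ¬ q.reverse.Nil := by
        rw [Walk.nil_iff_length_eq, Walk.length_reverse]
        have h3 := hc2.isCycle.three_le_length
        rw [Walk.length_cons] at h3
        omega
      have hqrs : q.reverse.support = none :: q.reverse.tail.support :=
        (Walk.cons_support_tail hqrnil).symm
      have hnr : none ∉ q.reverse.tail.support := by
        have hnd : q.reverse.support.Nodup := hqpath.reverse.support_nodup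
        rw [hqrs] at hnd
        exact (List.nodup_cons.mp hnd).1
      obtain ⟨a, b, hma, hxb, t, hsup⟩ := walk_down q.reverse.tail hnr
      refine ⟨a, b, t, ?_⟩
      have htp : t.IsPath := by
        apply Walk.IsPath.mk'
        have hrnd : q.reverse.tail.support.Nodup := by
          have hnd : q.reverse.support.Nodup := hqpath.reverse.support_nodup
          rw [hqrs] at hnd
          exact (List.nodup_cons.mp hnd).2
        rw [← hsup] at hrnd
        exact hrnd.of_map _
      apply htp.isHamiltonian_of_mem
      intro w
      have hw : some w ∈ q.reverse.support := by
        rw [Walk.support_reverse, List.mem_reverse]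
        exact hqmem (some w)
      rw [hqrs, List.mem_cons] at hw
      rcases hw with hw | hw
      · exact absurd hw (by simp)
      · rw [← hsup, List.mem_map] at hw
        obtain ⟨w', hw', hww⟩ := hw
        have hww' : w' = w := Option.some_injective V hww
        subst hww'
        exact hw'
end

section
/- If G is a simple graph on n vertices with minimum degree δ(G) ≥ (n−1)/2, then G has a hamilton path. -/
open SimpleGraph List

lemma exists_walk_of_chain {V : Type*} (G : SimpleGraph V) :
    ∀ (l : List V), l ≠ [] → l.Chain' G.Adj → ∃ (u v : V) (p : G.Walk u v), p.support = l := by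
  intro l
  induction l with
  | nil => simp
  | cons a t ih =>
    intro _ hc
    cases t with
    | nil => exact ⟨a, a, Walk.nil, rfl⟩
    | cons b t' =>
      obtain ⟨u, v, p, hp⟩ := ih (by simp) hc.tail
      have hu : u = b := by
        have := p.support_eq_cons
        rw [hp] at this; injection this with h1 _; exact h1.symm
      subst hu
      exact ⟨a, v, Walk.cons (List.isChain_cons_cons.1 hc).1 p, by simp [hp]⟩

lemma chain'_rotation {α : Type*} {R : α → α → Prop} {c₁ c₂ : List α} {x : α}
    (hc : (c₁ ++ x :: c₂).Chain' R)
    (hwrap : ∀ y ∈ (c₁ ++ x :: c₂).getLast?, ∀ z ∈ (c₁ ++ x :: c₂).head?, R y z) :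
    ((x :: c₂) ++ c₁).Chain' R := by
  rcases List.eq_nil_or_concat c₁ with h | h
  · subst h; simpa [List.Chain'] using (List.isChain_append.1 hc).2.1
  show List.IsChain _ _
  rw [List.isChain_append]
  obtain ⟨hc1, hc2, _⟩ := List.isChain_append.1 hc
  refine ⟨hc2, hc1, fun y hy z hz => hwrap y ?_ z ?_⟩
  · exact List.mem_getLast?_append_of_mem_getLast? hy
  · exact List.mem_head?_append_of_mem_head? hz

lemma ham_of_full {V : Type*} [Fintype V] [DecidableEq V] (G : SimpleGraph V) (l : List V)
    (hne : l ≠ []) (hnd : l.Nodup) (hch : l.Chain' G.Adj) (hlen : Fintype.card V ≤ l.length) :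
    ∃ (u v : V) (p : G.Walk u v), p.IsHamiltonian := by
  obtain ⟨u, v, p, hp⟩ := exists_walk_of_chain G l hne hch
  refine ⟨u, v, p, Walk.IsPath.isHamiltonian_of_mem (Walk.IsPath.mk' (hp ▸ hnd)) ?_⟩
  intro w
  rw [hp, ← List.mem_toFinset]
  have huniv : l.toFinset = Finset.univ := by
    apply Finset.eq_univ_of_card
    rw [List.toFinset_card_of_nodup hnd]
    exact le_antisymm hnd.length_le_card hlen
  rw [huniv]; exact Finset.mem_univ w

theorem hamiltonian_path_of_minDegree {V : Type*} [Fintype V] [DecidableEq V] [Nonempty V]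
    (G : SimpleGraph V) [DecidableRel G.Adj] (n : ℕ) (hn : Fintype.card V = n)
    (hδ : n - 1 ≤ 2 * G.minDegree) :
    ∃ (u v : V) (p : G.Walk u v), p.IsHamiltonian := by
  classical
  subst hn
  set N := Fintype.card V with hN
  let P : ℕ → Prop := fun m => ∃ l : List V, l.Nodup ∧ l.Chain' G.Adj ∧ l.length = m + 1
  have hP0 : P 0 := ⟨[Classical.arbitrary V], by simp, by constructor, rfl⟩
  obtain ⟨l, hnd, hch, hlen⟩ : P (Nat.findGreatest P N) :=
    Nat.findGreatest_spec (Nat.zero_le N) hP0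
  have hmax : ∀ l' : List V, l'.Nodup → l'.Chain' G.Adj → l'.length ≤ l.length := by
    intro l' hnd' hch'
    by_contra hlt
    push_neg at hlt
    have hle : l'.length ≤ N := hnd'.length_le_card
    exact Nat.findGreatest_is_greatest (P := P) (n := N) (k := l'.length - 1)
      (by omega) (by omega) ⟨l', hnd', hch', by omega⟩
  have hlpos : 1 ≤ l.length := by omega
  have hne : l ≠ [] := by intro h; rw [h] at hlpos; simp at hlpos
  set v0 := l.head hne with hv0
  set vk := l.getLast hne with hvk
  have hlcard : l.length ≤ N := hnd.length_le_card
  -- neighbors of endpoints are on the path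
  have hnb0 : ∀ x, G.Adj v0 x → x ∈ l := by
    intro x hx
    by_contra hxl
    have hchain : (x :: l).Chain' G.Adj := by
      show List.IsChain _ _
      rw [List.isChain_cons]
      refine ⟨fun y hy => ?_, hch⟩
      rw [List.head?_eq_head hne, Option.mem_some_iff] at hy
      subst hy; exact hx.symm
    have := hmax (x :: l) (List.nodup_cons.2 ⟨hxl, hnd⟩) hchain
    simp at this
  have hnbk : ∀ x, G.Adj vk x → x ∈ l := by
    intro x hx
    by_contra hxl
    have hchain : (l ++ [x]).Chain' G.Adj := by
      show List.IsChain _ _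
      rw [List.isChain_append]
      refine ⟨hch, by simp, fun y hy z hz => ?_⟩
      rw [List.getLast?_eq_getLast hne, Option.mem_some_iff] at hy
      rw [List.head?_cons, Option.mem_some_iff] at hz
      subst hy; subst hz; exact hx
    have := hmax (l ++ [x]) (by simp [List.nodup_append, hnd, hxl]; exact fun a ha h => hxl (h ▸ ha)) hchain
    simp at this
  -- index sets
  set A : Finset ℕ := (Finset.range (l.length - 1)).filter (fun i => G.Adj v0 (l.getD (i+1) v0)) with hA
  set B : Finset ℕ := (Finset.range (l.length - 1)).filter (fun i => G.Adj vk (l.getD i v0)) with hB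
  have hcardA : A.card = G.degree v0 := by
    have hdeg : G.degree v0 = (G.neighborFinset v0).card := rfl
    rw [hdeg]
    apply Finset.card_bij (fun i _ => l.getD (i+1) v0)
    · intro a ha
      rw [hA, Finset.mem_filter] at ha
      exact (SimpleGraph.mem_neighborFinset _ _ _).2 ha.2
    · intro a ha b hb hab
      rw [hA, Finset.mem_filter, Finset.mem_range] at ha hb
      rw [List.getD_eq_getElem l v0 (show a + 1 < l.length by omega),
        List.getD_eq_getElem l v0 (show b + 1 < l.length by omega)] at hab
      have := (hnd.getElem_inj_iff).1 hab
      omega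
    · intro x hx
      rw [SimpleGraph.mem_neighborFinset] at hx
      obtain ⟨j, hj, hjx⟩ := List.mem_iff_getElem.1 (hnb0 x hx)
      have hxv : x ≠ v0 := fun h => G.irrefl (h ▸ hx)
      have hj0 : j ≠ 0 := by
        intro h; subst h
        exact hxv (by rw [← hjx, hv0, List.head_eq_getElem hne])
      have hj1 : j - 1 + 1 = j := by omega
      refine ⟨j - 1, ?_, ?_⟩
      · rw [hA, Finset.mem_filter, Finset.mem_range]
        constructor
        · omega
        · rw [hj1, List.getD_eq_getElem l v0 hj, hjx]; exact hx
      · rw [hj1, List.getD_eq_getElem l v0 hj, hjx]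
  have hcardB : B.card = G.degree vk := by
    have hdeg : G.degree vk = (G.neighborFinset vk).card := rfl
    rw [hdeg]
    apply Finset.card_bij (fun i _ => l.getD i v0)
    · intro a ha
      rw [hB, Finset.mem_filter] at ha
      exact (SimpleGraph.mem_neighborFinset _ _ _).2 ha.2
    · intro a ha b hb hab
      rw [hB, Finset.mem_filter, Finset.mem_range] at ha hb
      rw [List.getD_eq_getElem l v0 (show a < l.length by omega),
        List.getD_eq_getElem l v0 (show b < l.length by omega)] at hab
      exact (hnd.getElem_inj_iff).1 hab
    · intro x hx
      rw [SimpleGraph.mem_neighborFinset] at hx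
      obtain ⟨j, hj, hjx⟩ := List.mem_iff_getElem.1 (hnbk x hx)
      have hxv : x ≠ vk := fun h => G.irrefl (h ▸ hx)
      have hjk : j ≠ l.length - 1 := by
        intro h; subst h
        exact hxv (by rw [← hjx, hvk, List.getLast_eq_getElem hne])
      refine ⟨j, ?_, ?_⟩
      · rw [hB, Finset.mem_filter, Finset.mem_range]
        constructor
        · omega
        · rw [List.getD_eq_getElem l v0 hj, hjx]; exact hx
      · rw [List.getD_eq_getElem l v0 hj, hjx]
  by_cases hfull : N ≤ l.length
  · exact ham_of_full G l hne hnd hch hfull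
  push_neg at hfull
  exfalso
  have hdegA : A.card ≤ l.length - 1 := by
    calc A.card ≤ (Finset.range (l.length - 1)).card := by
          rw [hA]; exact Finset.card_filter_le _ _
      _ = l.length - 1 := Finset.card_range _
  have hdegB : B.card ≤ l.length - 1 := by
    calc B.card ≤ (Finset.range (l.length - 1)).card := by
          rw [hB]; exact Finset.card_filter_le _ _
      _ = l.length - 1 := Finset.card_range _
  have hm0 := G.minDegree_le_degree v0
  have hmk := G.minDegree_le_degree vk
  by_cases hcross : ∃ j, j ∈ A ∧ j ∈ B
  case neg =>
    have hdisj : Disjoint A B := Finset.disjoint_left.2 (fun j ha hb => hcross ⟨j, ha, hb⟩)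
    have hAB : A.card + B.card ≤ l.length - 1 := by
      rw [← Finset.card_union_of_disjoint hdisj]
      calc (A ∪ B).card ≤ (Finset.range (l.length - 1)).card := by
            apply Finset.card_le_card
            rw [hA, hB]
            exact Finset.union_subset (Finset.filter_subset _ _) (Finset.filter_subset _ _)
        _ = l.length - 1 := Finset.card_range _
    omega
  case pos =>
    obtain ⟨i, hiA, hiB⟩ := hcross
    have hiL : i < l.length - 1 := by
      rw [hA, Finset.mem_filter, Finset.mem_range] at hiA; exact hiA.1
    have hi1 : i + 1 < l.length := by omega
    have hadj1 : G.Adj v0 (l.getD (i+1) v0) := by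
      rw [hA, Finset.mem_filter] at hiA; exact hiA.2
    have hadjk : G.Adj vk (l.getD i v0) := by
      rw [hB, Finset.mem_filter] at hiB; exact hiB.2
    -- a vertex not on the path
    obtain ⟨w, hw⟩ : ∃ w, w ∉ l := by
      by_contra h
      push_neg at h
      have hsub : (Finset.univ : Finset V) ⊆ l.toFinset := fun y _ => List.mem_toFinset.2 (h y)
      have := Finset.card_le_card hsub
      rw [Finset.card_univ, List.toFinset_card_of_nodup hnd] at this
      omega
    -- w has a neighbor on the path
    obtain ⟨x, hxl, hwx⟩ : ∃ x ∈ l, G.Adj w x := by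
      by_contra h
      push_neg at h
      have hsub : G.neighborFinset w ⊆ Finset.univ \ insert w l.toFinset := by
        intro y hy
        rw [SimpleGraph.mem_neighborFinset] at hy
        rw [Finset.mem_sdiff, Finset.mem_insert]
        refine ⟨Finset.mem_univ _, ?_⟩
        rintro (rfl | hyl)
        · exact G.irrefl hy
        · exact h y (List.mem_toFinset.1 hyl) hy
      have hcard := Finset.card_le_card hsub
      rw [Finset.card_sdiff_of_subset (Finset.subset_univ _), Finset.card_univ,
        Finset.card_insert_of_notMem (by simpa using hw), List.toFinset_card_of_nodup hnd] at hcard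
      have hmw := G.minDegree_le_degree w
      have hdw : G.degree w = (G.neighborFinset w).card := rfl
      rw [← hdw] at hcard
      omega
    -- the rotated cycle
    set c : List V := l.take (i+1) ++ (l.drop (i+1)).reverse with hc
    have hperm : c.Perm l := by
      rw [hc]
      calc l.take (i+1) ++ (l.drop (i+1)).reverse
          ~ l.take (i+1) ++ l.drop (i+1) := List.Perm.append_left _ (List.reverse_perm _)
        _ = l := List.take_append_drop _ _
    have htakene : l.take (i+1) ≠ [] := by
      intro h
      have := congrArg List.length h
      rw [List.length_take, min_eq_left (show i + 1 ≤ l.length by omega),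
        List.length_nil] at this
      omega
    have hdropne : l.drop (i+1) ≠ [] := by
      intro h
      have := congrArg List.length h
      rw [List.length_drop, List.length_nil] at this
      omega
    have htake_s : l.take (i+1) = l.take i ++ [l.getD i v0] := by
      rw [List.take_succ, List.getElem?_eq_getElem (show i < l.length by omega),
        List.getD_eq_getElem l v0 (show i < l.length by omega)]
      rfl
    have hlhead : l = v0 :: l.tail := (List.cons_head_tail hne).symm
    have htake_head : l.take (i+1) = v0 :: (l.tail.take i) := by
      conv_lhs => rw [hlhead]
      rw [List.take_succ_cons]
    have hdrop_s : l.drop (i+1) = l.getD (i+1) v0 :: l.drop (i+2) := by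
      rw [List.getD_eq_getElem l v0 hi1]
      exact List.drop_eq_getElem_cons hi1
    -- head?/getLast? facts
    have hhead_c : c.head? = some v0 := by
      rw [hc, List.head?_append_of_ne_nil _ htakene, htake_head]
      rfl
    have hlast_c : c.getLast? = some (l.getD (i+1) v0) := by
      rw [hc, List.getLast?_append_of_ne_nil _ (by simp [hdropne])]
      rw [List.getLast?_reverse, hdrop_s]
      rfl
    have hgl_take : (l.take (i+1)).getLast? = some (l.getD i v0) := by
      rw [htake_s]
      simp
    have hhead_revdrop : (l.drop (i+1)).reverse.head? = some vk := by
      rw [List.head?_reverse]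
      have h1 : l.getLast? = (l.drop (i+1)).getLast? := by
        conv_lhs => rw [← List.take_append_drop (i+1) l]
        rw [List.getLast?_append_of_ne_nil _ hdropne]
      rw [← h1, List.getLast?_eq_getLast hne, hvk]
    have hchc : c.Chain' G.Adj := by
      rw [hc]; show List.IsChain _ _; rw [List.isChain_append]
      refine ⟨hch.take _, ?_, ?_⟩
      · rw [List.isChain_reverse]
        exact (hch.drop _).imp fun a b hab => hab.symm
      · intro y hy z hz
        rw [hgl_take, Option.mem_some_iff] at hy
        rw [hhead_revdrop, Option.mem_some_iff] at hz
        subst hy; subst hz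
        exact hadjk.symm
    have hxc : x ∈ c := hperm.mem_iff.2 hxl
    obtain ⟨c₁, c₂, hceq⟩ := List.append_of_mem hxc
    have hrot : ((x :: c₂) ++ c₁).Chain' G.Adj := by
      apply chain'_rotation (hceq ▸ hchc)
      intro y hy z hz
      rw [← hceq] at hy hz
      rw [hlast_c, Option.mem_some_iff] at hy
      rw [hhead_c, Option.mem_some_iff] at hz
      subst hy; subst hz
      exact hadj1.symm
    set L := w :: ((x :: c₂) ++ c₁) with hL
    have hLch : L.Chain' G.Adj := by
      rw [hL]; show List.IsChain _ _; rw [List.isChain_cons]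
      refine ⟨fun y hy => ?_, hrot⟩
      rw [List.cons_append, List.head?_cons, Option.mem_some_iff] at hy
      subst hy; exact hwx
    have hpermL : ((x :: c₂) ++ c₁).Perm c := by
      rw [hceq]; exact List.perm_append_comm
    have hLnd : L.Nodup := by
      rw [hL, List.nodup_cons]
      refine ⟨fun hmem => hw (hperm.mem_iff.1 (hpermL.mem_iff.1 hmem)), ?_⟩
      exact hpermL.nodup_iff.2 (hperm.nodup_iff.2 hnd)
    have h1 : c.length = l.length := hperm.length_eq
    have h2 : c.length = c₁.length + (c₂.length + 1) := by rw [hceq]; simp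
    have h3 : L.length = c₂.length + 1 + c₁.length + 1 := by rw [hL]; simp; omega
    have := hmax L hLnd hLch
    omega
end

section
/- For any finite simple graph G, λ(G) ≤ |V(G)| + χ(G) − 2, where χ(G) is the chromatic number. -/
open SimpleGraph

lemma key_labeling {V : Type*} [Fintype V] (G : SimpleGraph V) {k : ℕ}
    (C : G.Coloring (Fin k)) (hk : 1 ≤ k) :
    ∃ f : V → ℤ, IsL21 G f ∧ labelSpan f ≤ Fintype.card V + k - 2 := by
  classical
  by_cases hV : Nonempty V
  case neg =>
    refine ⟨fun _ => 0, ⟨?_, ?_⟩, ?_⟩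
    · intro x y _; exact absurd ⟨x⟩ hV
    · intro x y _; exact absurd ⟨x⟩ hV
    · simp [labelSpan]
  have hn : 1 ≤ Fintype.card V := Fintype.card_pos
  set n := Fintype.card V with hndef
  let ι := Fintype.equivFin V
  let key : V → ℕ ×ₗ ℕ := fun v => toLex ((C v : ℕ), (ι v : ℕ))
  have keyinj : Function.Injective key := by
    intro v w h
    have : ((C v : ℕ), (ι v : ℕ)) = ((C w : ℕ), (ι w : ℕ)) := congrArg ofLex h
    have h2 : (ι v : ℕ) = (ι w : ℕ) := congrArg Prod.snd this
    exact ι.injective (Fin.ext h2)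
  let r : V → ℕ := fun v => (Finset.univ.filter (fun w => key w < key v)).card
  have rmono : ∀ v w, key v < key w → r v < r w := by
    intro v w h
    apply Finset.card_lt_card
    constructor
    · intro u hu
      simp only [Finset.mem_filter, Finset.mem_univ, true_and] at hu ⊢
      exact lt_trans hu h
    · intro hsub
      have hv : v ∈ Finset.univ.filter (fun u => key u < key w) := by
        simp [h]
      have := hsub hv
      simp at this
  have rbound : ∀ v, r v ≤ n - 1 := by
    intro v
    have hsub : (Finset.univ.filter (fun w => key w < key v)) ⊆ Finset.univ.erase v := by
      intro u hu
      simp only [Finset.mem_filter, Finset.mem_univ, true_and] at hu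
      refine Finset.mem_erase.2 ⟨?_, Finset.mem_univ u⟩
      rintro rfl; exact lt_irrefl _ hu
    calc r v ≤ (Finset.univ.erase v).card := Finset.card_le_card hsub
      _ = n - 1 := by rw [Finset.card_erase_of_mem (Finset.mem_univ v), Finset.card_univ]
  let f : V → ℤ := fun v => (r v : ℤ) + (C v : ℕ)
  have fmono : ∀ v w, key v < key w → f v < f w := by
    intro v w h
    have h1 : r v < r w := rmono v w h
    have h2 : (C v : ℕ) ≤ (C w : ℕ) := by
      rcases Prod.Lex.lt_iff.mp h with h | ⟨h, _⟩
      · exact le_of_lt h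
      · exact le_of_eq h
    have : (r v : ℤ) + 1 ≤ r w := by exact_mod_cast h1
    simp only [f]
    push_cast
    omega
  have fadj : ∀ v w, (C v : ℕ) < (C w : ℕ) → f v + 2 ≤ f w := by
    intro v w h
    have hkey : key v < key w := Prod.Lex.lt_iff.mpr (Or.inl h)
    have h1 : r v < r w := rmono v w hkey
    simp only [f]
    have : (r v : ℤ) + 1 ≤ r w := by exact_mod_cast h1
    have : (C v : ℤ) + 1 ≤ (C w : ℕ) := by exact_mod_cast h
    push_cast at *
    omega
  refine ⟨f, ⟨?_, ?_⟩, ?_⟩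
  · intro x y hadj
    have hne : (C x : ℕ) ≠ (C y : ℕ) := fun h => C.valid hadj (Fin.ext h)
    rcases hne.lt_or_gt with h | h
    · have := fadj x y h; rw [abs_sub_comm]; rw [abs_of_nonneg (by omega)]; omega
    · have := fadj y x h; rw [abs_of_nonneg (by omega)]; omega
  · intro x y hd
    have hne : x ≠ y := by
      rintro rfl; rw [SimpleGraph.dist_self] at hd; omega
    have : key x ≠ key y := fun h => hne (keyinj h)
    rcases this.lt_or_gt with h | h
    · have := fmono x y h; rw [abs_sub_comm, abs_of_nonneg (by omega)]; omega
    · have := fmono y x h; rw [abs_of_nonneg (by omega)]; omega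
  · apply Finset.sup_le
    intro p _
    have h1 : f p.1 ≤ (n - 1 : ℕ) + (k - 1 : ℕ) := by
      have := rbound p.1
      have hc : (C p.1 : ℕ) ≤ k - 1 := by have := (C p.1).isLt; omega
      simp only [f]; push_cast; omega
    have h2 : (0 : ℤ) ≤ f p.2 := by simp only [f]; positivity
    have : (f p.1 - f p.2).toNat ≤ (n - 1) + (k - 1) := by omega
    omega

theorem lambda21_le_card_add_chromaticNumber {V : Type*} [Fintype V] (G : SimpleGraph V) :
    (lambda21 G : ℕ∞) ≤ (Fintype.card V : ℕ∞) + G.chromaticNumber - 2 := by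
  classical
  rcases isEmpty_or_nonempty V with h | h
  · have hmem : (0 : ℕ) ∈ {s | ∃ f : V → ℤ, IsL21 G f ∧ labelSpan f = s} := by
      refine ⟨fun _ => 0, ⟨fun x => (h.false x).elim, fun x => (h.false x).elim⟩, ?_⟩
      simp [labelSpan]
    have : lambda21 G = 0 := Nat.le_zero.mp (Nat.sInf_le hmem)
    simp [this]
  · -- χ is finite and positive
    have hcol : G.Colorable (ENat.toNat G.chromaticNumber) :=
      G.colorable_chromaticNumber_of_fintype
    set k := ENat.toNat G.chromaticNumber with hkdef
    have hknt : G.chromaticNumber ≠ ⊤ :=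
      SimpleGraph.chromaticNumber_ne_top_iff_exists.mpr ⟨_, G.colorable_of_fintype⟩
    have hchrom : G.chromaticNumber = (k : ℕ∞) := (ENat.coe_toNat hknt).symm
    have hkpos : 1 ≤ k := by
      have := G.chromaticNumber_pos G.colorable_of_fintype
      rw [hchrom] at this
      exact_mod_cast this
    obtain ⟨C⟩ := hcol
    obtain ⟨f, hf, hspan⟩ := key_labeling G C hkpos
    have hmem : labelSpan f ∈ {s | ∃ f : V → ℤ, IsL21 G f ∧ labelSpan f = s} := ⟨f, hf, rfl⟩
    have hle : lambda21 G ≤ Fintype.card V + k - 2 := le_trans (Nat.sInf_le hmem) hspan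
    have hcast : (lambda21 G : ℕ∞) ≤ ((Fintype.card V + k - 2 : ℕ) : ℕ∞) := by
      exact_mod_cast hle
    rw [hchrom]
    refine le_trans hcast (le_of_eq ?_)
    rw [ENat.coe_sub, Nat.cast_add]
    rfl
end

section
/- Let G and H be finite simple graphs with H a subgraph of G, and let C be a proper coloring of G with color classes C_0, …, C_{L−1} (possibly empty). Then Span(G,H) ≤ L − 1 if and only if there exists such a coloring C for which the complement of the color adjacency graph of (C,G,H) has a hamilton path. -/
open SimpleGraph

/-- A `(G,H)`-labeling of the pair `H ⊆ G` with labels in `{0, …, t}`: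
edges of `H` get labels differing by at least 2, and edges of `G` not in `H`
get labels differing by at least 1. -/
def IsGHLabeling {V : Type*} (G H : SimpleGraph V) (t : ℕ) (φ : V → ℤ) : Prop :=
  (∀ v, 0 ≤ φ v ∧ φ v ≤ (t : ℤ)) ∧
  (∀ u v, H.Adj u v → 2 ≤ |φ u - φ v|) ∧
  (∀ u v, G.Adj u v → ¬ H.Adj u v → 1 ≤ |φ u - φ v|)

/-- `Span(G,H)`: the least `t` admitting a `(G,H)`-labeling. -/
noncomputable def spanGH {V : Type*} (G H : SimpleGraph V) : ℕ :=
  sInf {t | ∃ φ : V → ℤ, IsGHLabeling G H t φ}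

/-- The color adjacency graph of a coloring `c` of `G` with `L` classes (with respect to the
weight-2 subgraph `H`): classes are adjacent iff joined by an edge of `H`. -/
def colorAdjGraph {V : Type*} {L : ℕ} (H : SimpleGraph V) (c : V → Fin L) :
    SimpleGraph (Fin L) where
  Adj i j := i ≠ j ∧ ∃ u v, H.Adj u v ∧ c u = i ∧ c v = j
  symm := by
    constructor
    rintro i j ⟨hne, u, v, h, hu, hv⟩
    exact ⟨hne.symm, v, u, h.symm, hv, hu⟩
  loopless := by constructor; rintro i ⟨hne, -⟩; exact hne rfl

/-- A walk descending from `k` to `0` in a graph on `Fin L` where consecutive values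
are adjacent. -/
def descWalk {L : ℕ} (G' : SimpleGraph (Fin L))
    (h : ∀ k (hk : k + 1 < L), G'.Adj ⟨k + 1, hk⟩ ⟨k, Nat.lt_of_succ_lt hk⟩) :
    (k : ℕ) → (hk : k < L) → G'.Walk ⟨k, hk⟩ ⟨0, Nat.lt_of_le_of_lt (Nat.zero_le k) hk⟩
  | 0, _ => Walk.nil
  | k + 1, hk => Walk.cons (h k hk) (descWalk G' h k (Nat.lt_of_succ_lt hk))

lemma descWalk_mem_support {L : ℕ} (G' : SimpleGraph (Fin L))
    (h : ∀ k (hk : k + 1 < L), G'.Adj ⟨k + 1, hk⟩ ⟨k, Nat.lt_of_succ_lt hk⟩) :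
    ∀ (k : ℕ) (hk : k < L) (a : Fin L),
      a ∈ (descWalk G' h k hk).support ↔ a.val ≤ k := by
  intro k
  induction k with
  | zero =>
    intro hk a
    simp only [descWalk, Walk.support_nil, List.mem_singleton]
    constructor
    · rintro rfl; rfl
    · intro ha; exact Fin.ext (Nat.le_zero.mp ha)
  | succ k ih =>
    intro hk a
    simp only [descWalk, Walk.support_cons, List.mem_cons, ih (Nat.lt_of_succ_lt hk)]
    constructor
    · rintro (rfl | ha)
      · exact le_refl _
      · omega
    · intro ha
      rcases Nat.lt_or_ge a.val (k + 1) with h' | h'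
      · right; omega
      · left; exact Fin.ext (show a.val = k + 1 by omega)

lemma descWalk_support_nodup {L : ℕ} (G' : SimpleGraph (Fin L))
    (h : ∀ k (hk : k + 1 < L), G'.Adj ⟨k + 1, hk⟩ ⟨k, Nat.lt_of_succ_lt hk⟩) :
    ∀ (k : ℕ) (hk : k < L), (descWalk G' h k hk).support.Nodup := by
  intro k
  induction k with
  | zero => intro hk; simp [descWalk]
  | succ k ih =>
    intro hk
    simp only [descWalk, Walk.support_cons, List.nodup_cons]
    refine ⟨fun hmem => ?_, ih (Nat.lt_of_succ_lt hk)⟩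
    rw [descWalk_mem_support] at hmem
    simp at hmem

lemma adj_of_indexOf_succ {α : Type*} [DecidableEq α] {G' : SimpleGraph α} {a b : α}
    (p : G'.Walk a b) {x y : α} (hx : x ∈ p.support) (hy : y ∈ p.support)
    (h : p.support.idxOf x + 1 = p.support.idxOf y) : G'.Adj x y := by
  have hchain := p.isChain_adj_support
  rw [List.isChain_iff_getElem] at hchain
  have hxl := List.idxOf_lt_length_iff.2 hx
  have hyl := List.idxOf_lt_length_iff.2 hy
  have h1 : p.support.idxOf x + 1 < p.support.length := by omega
  have := hchain (p.support.idxOf x) h1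
  rw [List.getElem_idxOf] at this
  have h2 : p.support[p.support.idxOf x + 1]'(by omega) = y := by
    have : p.support.idxOf x + 1 = p.support.idxOf y := h
    simp_rw [this]
    exact List.getElem_idxOf hyl
  rwa [h2] at this

theorem spanGH_le_iff_hamiltonPath {V : Type*} [Fintype V] [DecidableEq V]
    (G H : SimpleGraph V) (hHG : H ≤ G) (L : ℕ) (hL : 1 ≤ L) :
    spanGH G H ≤ L - 1 ↔
    ∃ c : V → Fin L, (∀ u v, G.Adj u v → c u ≠ c v) ∧
      ∃ (i j : Fin L) (p : (colorAdjGraph H c)ᶜ.Walk i j), p.IsHamiltonian := by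
  constructor
  · intro hspan
    -- The set of spans is nonempty.
    have hne : {t | ∃ φ : V → ℤ, IsGHLabeling G H t φ}.Nonempty := by
      refine ⟨2 * Fintype.card V, fun v => 2 * ((Fintype.equivFin V v : ℕ) : ℤ), ?_, ?_, ?_⟩
      · intro v
        have := (Fintype.equivFin V v).isLt
        constructor
        · positivity
        · push_cast; omega
      · intro u v huv
        have hne2 : (Fintype.equivFin V u : ℕ) ≠ (Fintype.equivFin V v : ℕ) :=
          fun h => huv.ne ((Fintype.equivFin V).injective (Fin.ext h))
        simp only []
        rcases abs_cases ((2 : ℤ) * ((Fintype.equivFin V u : ℕ) : ℤ)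
          - 2 * ((Fintype.equivFin V v : ℕ) : ℤ)) with ⟨h1, _⟩ | ⟨h1, _⟩ <;> omega
      · intro u v huv _
        have hne2 : (Fintype.equivFin V u : ℕ) ≠ (Fintype.equivFin V v : ℕ) :=
          fun h => huv.ne ((Fintype.equivFin V).injective (Fin.ext h))
        simp only []
        rcases abs_cases ((2 : ℤ) * ((Fintype.equivFin V u : ℕ) : ℤ)
          - 2 * ((Fintype.equivFin V v : ℕ) : ℤ)) with ⟨h1, _⟩ | ⟨h1, _⟩ <;> omega
    obtain ⟨φ, hbound, hH2, hG1⟩ := Nat.sInf_mem hne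
    have hs : (spanGH G H : ℤ) ≤ ((L - 1 : ℕ) : ℤ) := by exact_mod_cast hspan
    have hb : ∀ v, 0 ≤ φ v ∧ φ v ≤ ((L - 1 : ℕ) : ℤ) := by
      intro v
      have h1 := (hbound v).1
      have h2 := (hbound v).2
      exact ⟨h1, le_trans h2 hs⟩
    have hcb : ∀ v, (φ v).toNat < L := by
      intro v
      have h1 := (hb v).1
      have h2 := (hb v).2
      omega
    set c : V → Fin L := fun v => ⟨(φ v).toNat, hcb v⟩ with hc
    have hcval : ∀ v, ((c v : Fin L) : ℕ) = (φ v).toNat := fun v => rfl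
    have hproper : ∀ u v, G.Adj u v → c u ≠ c v := by
      intro u v huv hceq
      have hvals : (φ u).toNat = (φ v).toNat := congrArg Fin.val hceq
      have h1 := (hb u).1
      have h2 := (hb v).1
      have hφ : φ u = φ v := by omega
      by_cases hH : H.Adj u v
      · have := hH2 u v hH
        rw [hφ] at this
        simp at this
      · have := hG1 u v huv hH
        rw [hφ] at this
        simp at this
    refine ⟨c, hproper, ?_⟩
    have hadj : ∀ k (hk : k + 1 < L), ((colorAdjGraph H c)ᶜ).Adj ⟨k + 1, hk⟩
        ⟨k, Nat.lt_of_succ_lt hk⟩ := by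
      intro k hk
      refine ⟨fun h => by simpa using congrArg Fin.val h, ?_⟩
      rintro ⟨-, u, v, hH, hu, hv⟩
      have hu' : (φ u).toNat = k + 1 := congrArg Fin.val hu
      have hv' : (φ v).toNat = k := congrArg Fin.val hv
      have h2 := hH2 u v hH
      have h1u := (hb u).1
      have h1v := (hb v).1
      rcases abs_cases (φ u - φ v) with ⟨h3, _⟩ | ⟨h3, _⟩ <;> omega
    have hLlt : L - 1 < L := by omega
    refine ⟨⟨L - 1, hLlt⟩, ⟨0, by omega⟩, descWalk _ hadj (L - 1) hLlt, ?_⟩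
    intro a
    exact List.count_eq_one_of_mem (descWalk_support_nodup _ hadj (L - 1) hLlt)
      ((descWalk_mem_support _ hadj (L - 1) hLlt a).mpr (by omega))
  · rintro ⟨c, hproper, i, j, p, hp⟩
    have hnodup : p.support.Nodup := hp.isPath.support_nodup
    have hlen : p.support.length ≤ L := by
      simpa using hnodup.length_le_card
    apply Nat.sInf_le
    refine ⟨fun v => (p.support.idxOf (c v) : ℤ), ?_, ?_, ?_⟩
    · intro v
      have := List.idxOf_lt_length_iff.2 (hp.mem_support (c v))
      constructor
      · positivity
      · have : p.support.idxOf (c v) ≤ L - 1 := by omega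
        push_cast [Nat.cast_sub hL] at *
        omega
    · intro u v huv
      have hcu := hp.mem_support (c u)
      have hcv := hp.mem_support (c v)
      have hne' : c u ≠ c v := hproper u v (hHG huv)
      have hidx : p.support.idxOf (c u) ≠ p.support.idxOf (c v) := by
        intro h
        exact hne' (List.idxOf_inj (y := c v) hcu |>.mp (by
          simp_rw [h]))
      by_contra hcon
      push_neg at hcon
      -- |x - y| ≤ 1 with x ≠ y means consecutive
      have hAdjCG : (colorAdjGraph H c).Adj (c u) (c v) :=
        ⟨hne', u, v, huv, rfl, rfl⟩
      rcases Nat.lt_or_ge (p.support.idxOf (c u)) (p.support.idxOf (c v)) with hlt | hge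
      · have hsucc : p.support.idxOf (c u) + 1 = p.support.idxOf (c v) := by
          rw [abs_sub_lt_iff] at hcon; omega
        have := adj_of_indexOf_succ p hcu hcv hsucc
        exact this.2 hAdjCG
      · have hsucc : p.support.idxOf (c v) + 1 = p.support.idxOf (c u) := by
          rw [abs_sub_lt_iff] at hcon; omega
        have := adj_of_indexOf_succ p hcv hcu hsucc
        exact this.2 hAdjCG.symm
    · intro u v huv _
      have hcu := hp.mem_support (c u)
      have hcv := hp.mem_support (c v)
      have hne' : c u ≠ c v := hproper u v huv
      have hidx : p.support.idxOf (c u) ≠ p.support.idxOf (c v) := by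
        intro h
        exact hne' (List.idxOf_inj (y := c v) hcu |>.mp (by simp_rw [h]))
      rcases abs_cases ((p.support.idxOf (c u) : ℤ) - (p.support.idxOf (c v) : ℤ)) with
        ⟨h1, _⟩ | ⟨h1, _⟩ <;> simp only [] <;> omega
end
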